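/- arXiv:2103.06760 — 5 statements merged into one kernel-verified Lean document; each statement's English description precedes it below -/
import Mathlib

section
/- Let G be a 2K_2-free graph on n vertices with independence number α(G). Then the set of vertices x with degree d_G(x) ≤ (n − α(G))/2 is an independent set in G. -/
open SimpleGraph

/-- A set of vertices is independent: no two of its members are adjacent. -/
def IsIndepSet {V : Type*} (G : SimpleGraph V) (s : Set V) : Prop :=
  ∀ x ∈ s, ∀ y ∈ s, ¬ G.Adj x y

/-- `G` contains no induced `2K₂`: there are no two disjoint edges with no
edge of `G` between them. -/
def TwoK2Free {V : Type*} (G : SimpleGraph V) : Prop :=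
  ¬ ∃ a b c d : V, G.Adj a b ∧ G.Adj c d ∧ a ≠ c ∧ a ≠ d ∧ b ≠ c ∧ b ≠ d ∧
    ¬ G.Adj a c ∧ ¬ G.Adj a d ∧ ¬ G.Adj b c ∧ ¬ G.Adj b d

/-- The independence number of `G`. -/
noncomputable def indepNum {V : Type*} [Fintype V] (G : SimpleGraph V) : ℕ :=
  sSup {n | ∃ s : Finset V, _root_.IsIndepSet G ↑s ∧ s.card = n}

/-- The number of connected components of a graph. -/
noncomputable def compCount {W : Type*} (H : SimpleGraph W) : ℕ :=
  Nat.card H.ConnectedComponent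

/-- `G` is `t`-tough: whenever removing a vertex set `S` disconnects the rest
into more than one component, `|S| ≥ t · ω(G − S)`. -/
def Tough {V : Type*} [Fintype V] (t : ℝ) (G : SimpleGraph V) : Prop :=
  ∀ S : Finset V,
    1 < compCount (G.induce ((↑S : Set V)ᶜ)) →
    t * compCount (G.induce ((↑S : Set V)ᶜ)) ≤ S.card

/-- An (oriented) `2`-factor of `G`, encoded as a permutation `σ` of the
vertices: each vertex is adjacent to its successor `σ x`, and every cycle of
`σ` has length at least `3`.  The cycles of `σ` are exactly the cycles of the
`2`-factor, with a fixed orientation; the successor of `x` is `σ x` and its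
predecessor is `σ⁻¹ x`. -/
def IsTwoFactor {V : Type*} (G : SimpleGraph V) (σ : Equiv.Perm V) : Prop :=
  ∀ x : V, G.Adj x (σ x) ∧ σ (σ x) ≠ x

/-- The number of components (cycles) of a `2`-factor encoded as a permutation. -/
noncomputable def numCycles {V : Type*} [Fintype V] (σ : Equiv.Perm V) : ℕ :=
  (@Equiv.Perm.cycleType V _ (Classical.decEq V) σ).card

/-- `σ` is a `2`-factor of `G` with the minimum number of components. -/
def IsMinTwoFactor {V : Type*} [Fintype V] (G : SimpleGraph V) (σ : Equiv.Perm V) : Prop :=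
  IsTwoFactor G σ ∧ ∀ τ : Equiv.Perm V, IsTwoFactor G τ → numCycles σ ≤ numCycles τ

/-- An (oriented) `2`-factor of `G − x`, encoded as a permutation of `V`
fixing `x`. -/
def IsTwoFactorAvoiding {V : Type*} (G : SimpleGraph V) (x : V) (σ' : Equiv.Perm V) : Prop :=
  σ' x = x ∧ ∀ y : V, y ≠ x → G.Adj y (σ' y) ∧ σ' (σ' y) ≠ y

/-- `x` is co-absorbable w.r.t. the `2`-factor `σ`: `G − x` has a `2`-factor
with strictly fewer components than `σ`. -/
def CoAbsorbable {V : Type*} [Fintype V] (G : SimpleGraph V) (σ : Equiv.Perm V) (x : V) : Prop :=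
  ∃ σ' : Equiv.Perm V, IsTwoFactorAvoiding G x σ' ∧ numCycles σ' < numCycles σ

/-- `x` is of `A`-type w.r.t. the `2`-factor `σ`: some other cycle of `σ`
contains two consecutive vertices `z`, `σ z` both adjacent to `x`. -/
def AType {V : Type*} (G : SimpleGraph V) (σ : Equiv.Perm V) (x : V) : Prop :=
  ∃ z : V, ¬ σ.SameCycle x z ∧ G.Adj x z ∧ G.Adj x (σ z)

/-- The degree of a vertex. -/
noncomputable def vdeg {V : Type*} (G : SimpleGraph V) (x : V) : ℕ :=
  Nat.card (G.neighborSet x)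

theorem stmt1 {V : Type*} [Fintype V] (G : SimpleGraph V) (h : TwoK2Free G) :
    _root_.IsIndepSet G
      {x : V | (vdeg G x : ℝ) ≤ ((Fintype.card V : ℝ) - (_root_.indepNum G : ℝ)) / 2} := by
  classical
  intro x hx y hy hxy
  simp only [Set.mem_setOf_eq] at hx hy
  set n := Fintype.card V with hn
  have hdeg : ∀ z : V, vdeg G z = G.degree z := by
    intro z
    simp [vdeg, Nat.card_eq_fintype_card, SimpleGraph.degree, SimpleGraph.neighborFinset,
      Set.toFinset_card]
  set A : Finset V := (G.neighborFinset x ∪ G.neighborFinset y)ᶜ with hA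
  have hxA : x ∉ A := by
    simp [hA, SimpleGraph.mem_neighborFinset, hxy.symm]
  have hyA : y ∉ A := by
    simp [hA, SimpleGraph.mem_neighborFinset, hxy]
  have hAnx : ∀ a ∈ A, ¬ G.Adj x a ∧ ¬ G.Adj y a := by
    intro a ha
    simp only [hA, Finset.mem_compl, Finset.mem_union, SimpleGraph.mem_neighborFinset] at ha
    push_neg at ha
    exact ha
  -- insert x A is independent
  have hind : _root_.IsIndepSet G ↑(insert x A) := by
    intro a ha b hb hab
    simp only [Finset.coe_insert, Set.mem_insert_iff, Finset.mem_coe] at ha hb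
    rcases ha with rfl | ha
    · rcases hb with rfl | hb
      · exact G.loopless.irrefl _ hab
      · exact (hAnx b hb).1 hab
    · rcases hb with rfl | hb
      · exact (hAnx a ha).1 hab.symm
      · exact h ⟨x, y, a, b, hxy, hab,
          fun e => hxA (e ▸ ha), fun e => hxA (e ▸ hb),
          fun e => hyA (e ▸ ha), fun e => hyA (e ▸ hb),
          (hAnx a ha).1, (hAnx b hb).1, (hAnx a ha).2, (hAnx b hb).2⟩
  -- cardinality bound
  have hu : ((G.neighborFinset x ∪ G.neighborFinset y).card : ℝ) ≤ n - _root_.indepNum G := by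
    calc ((G.neighborFinset x ∪ G.neighborFinset y).card : ℝ)
        ≤ (G.degree x : ℝ) + G.degree y := by
          exact_mod_cast Finset.card_union_le _ _
      _ = (vdeg G x : ℝ) + vdeg G y := by rw [hdeg x, hdeg y]
      _ ≤ (n - _root_.indepNum G) / 2 + (n - _root_.indepNum G) / 2 := add_le_add hx hy
      _ = n - _root_.indepNum G := by ring
  have hAcard : (_root_.indepNum G : ℝ) ≤ (A.card : ℝ) := by
    have h1 : A.card = n - (G.neighborFinset x ∪ G.neighborFinset y).card :=
      Finset.card_compl _
    have h2 : (G.neighborFinset x ∪ G.neighborFinset y).card ≤ n :=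
      Finset.card_le_univ _
    have : (A.card : ℝ) = (n : ℝ) - (G.neighborFinset x ∪ G.neighborFinset y).card := by
      rw [h1, Nat.cast_sub h2]
    linarith
  have hAcard' : _root_.indepNum G ≤ A.card := by exact_mod_cast hAcard
  -- indepNum bound
  have hmem : (insert x A).card ∈ {m | ∃ s : Finset V, _root_.IsIndepSet G ↑s ∧ s.card = m} :=
    ⟨insert x A, hind, rfl⟩
  have hbdd : BddAbove {m | ∃ s : Finset V, _root_.IsIndepSet G ↑s ∧ s.card = m} := by
    refine ⟨n, ?_⟩
    rintro m ⟨s, -, rfl⟩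
    exact Finset.card_le_univ s
  have hle : (insert x A).card ≤ _root_.indepNum G := le_csSup hbdd hmem
  rw [Finset.card_insert_of_notMem hxA] at hle
  omega
end

section
/- Let G be a graph containing a 2-factor, and let F be a 2-factor of G with the minimum number of components. If a vertex x of G is co-absorbable (i.e., G − x has a 2-factor with strictly fewer components than F), then d_G(x) ≤ α(G) − 1. -/
open SimpleGraph

open Equiv Equiv.Perm List

set_option linter.unusedSectionVars false
set_option maxHeartbeats 1000000

section Helpers
variable {V : Type*} [Fintype V] [DecidableEq V]


lemma rho1_apply (π : Perm V) (w v : V) :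
    (π * (π.cycleOf w)⁻¹) v = if π.SameCycle w v then v else π v := by
  rw [Equiv.Perm.mul_apply, Equiv.Perm.cycleOf_inv, Equiv.Perm.cycleOf_apply]
  split_ifs with h1 h2 h2
  · simp
  · exact absurd ((Equiv.Perm.sameCycle_inv).mp h1) h2
  · exact absurd (Equiv.Perm.sameCycle_inv.mpr h2) h1
  · rfl

lemma card_cycleType_rho1 (π : Perm V) (w : V) (hw : π w ≠ w) :
    Multiset.card (π * (π.cycleOf w)⁻¹).cycleType + 1 = Multiset.card π.cycleType := by
  have hcyc : (π.cycleOf w).IsCycle := Equiv.Perm.isCycle_cycleOf π hw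
  have hd : (π.cycleOf w).Disjoint (π * (π.cycleOf w)⁻¹) := by
    intro v
    by_cases h : π.SameCycle w v
    · right; rw [rho1_apply, if_pos h]
    · left; exact Equiv.Perm.cycleOf_apply_of_not_sameCycle h
  have hfact : π = (π.cycleOf w) * (π * (π.cycleOf w)⁻¹) := by
    ext v
    rw [Equiv.Perm.mul_apply, rho1_apply]
    by_cases h : π.SameCycle w v
    · rw [if_pos h, h.cycleOf_apply]
    · have h2 : ¬ π.SameCycle w (π v) := fun hh => h (Equiv.Perm.sameCycle_apply_right.mp hh)
      rw [if_neg h, Equiv.Perm.cycleOf_apply_of_not_sameCycle h2]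
  conv_rhs => rw [hfact]
  rw [hd.cycleType_mul, hcyc.cycleType]
  simp [add_comm]

lemma cycleOf_inv_apply (π : Perm V) (w v : V) :
    (π.cycleOf w)⁻¹ v = if π.SameCycle w v then π⁻¹ v else v := by
  rw [Equiv.Perm.cycleOf_inv, Equiv.Perm.cycleOf_apply]
  split_ifs with h1 h2 h2
  · rfl
  · exact absurd ((Equiv.Perm.sameCycle_inv).mp h1) h2
  · exact absurd (Equiv.Perm.sameCycle_inv.mpr h2) h1
  · rfl

lemma rho2_apply (π : Perm V) (w z : V) (hnc : ¬ π.SameCycle w z) (v : V) :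
    (π * (π.cycleOf w)⁻¹ * (π.cycleOf z)⁻¹) v =
      if π.SameCycle w v ∨ π.SameCycle z v then v else π v := by
  rw [Equiv.Perm.mul_apply, cycleOf_inv_apply]
  by_cases hz : π.SameCycle z v
  · rw [if_pos hz, rho1_apply, if_neg, if_pos (Or.inr hz)]
    · simp
    · exact fun hw' => hnc (hw'.trans ((hz.trans ⟨-1, by simp⟩).symm))
  · rw [if_neg hz, rho1_apply]
    by_cases hwv : π.SameCycle w v
    · rw [if_pos hwv, if_pos (Or.inl hwv)]
    · rw [if_neg hwv, if_neg (by tauto)]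

lemma card_cycleType_rho2 (π : Perm V) (w z : V) (hw : π w ≠ w) (hz : π z ≠ z)
    (hnc : ¬ π.SameCycle w z) :
    Multiset.card (π * (π.cycleOf w)⁻¹ * (π.cycleOf z)⁻¹).cycleType + 2 =
      Multiset.card π.cycleType := by
  have hcyc1 : (π.cycleOf w).IsCycle := Equiv.Perm.isCycle_cycleOf π hw
  have hcyc2 : (π.cycleOf z).IsCycle := Equiv.Perm.isCycle_cycleOf π hz
  have hρ := rho2_apply π w z hnc
  have hd2 : (π.cycleOf z).Disjoint (π * (π.cycleOf w)⁻¹ * (π.cycleOf z)⁻¹) := by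
    intro v
    by_cases h : π.SameCycle z v
    · right; rw [hρ, if_pos (Or.inr h)]
    · left; exact Equiv.Perm.cycleOf_apply_of_not_sameCycle h
  have hd1 : (π.cycleOf w).Disjoint
      ((π.cycleOf z) * (π * (π.cycleOf w)⁻¹ * (π.cycleOf z)⁻¹)) := by
    intro v
    by_cases h : π.SameCycle w v
    · right
      rw [Equiv.Perm.mul_apply, hρ, if_pos (Or.inl h),
        Equiv.Perm.cycleOf_apply_of_not_sameCycle (fun hh => hnc (h.trans hh.symm))]
    · left; exact Equiv.Perm.cycleOf_apply_of_not_sameCycle h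
  have hfact : π = (π.cycleOf w) * ((π.cycleOf z) * (π * (π.cycleOf w)⁻¹ * (π.cycleOf z)⁻¹)) := by
    ext v
    rw [Equiv.Perm.mul_apply, Equiv.Perm.mul_apply, hρ]
    by_cases h1 : π.SameCycle w v
    · rw [if_pos (Or.inl h1),
        Equiv.Perm.cycleOf_apply_of_not_sameCycle (fun hh => hnc (h1.trans hh.symm)),
        h1.cycleOf_apply]
    · by_cases h2 : π.SameCycle z v
      · rw [if_pos (Or.inr h2), h2.cycleOf_apply,
          Equiv.Perm.cycleOf_apply_of_not_sameCycle
            (fun hh => h1 (Equiv.Perm.sameCycle_apply_right.mp hh))]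
      · rw [if_neg (by tauto),
          Equiv.Perm.cycleOf_apply_of_not_sameCycle
            (fun hh : π.SameCycle z (π v) => h2 (Equiv.Perm.sameCycle_apply_right.mp hh)),
          Equiv.Perm.cycleOf_apply_of_not_sameCycle
            (fun hh : π.SameCycle w (π v) => h1 (Equiv.Perm.sameCycle_apply_right.mp hh))]
  conv_rhs => rw [hfact]
  rw [hd1.cycleType_mul, hd2.cycleType_mul, hcyc1.cycleType, hcyc2.cycleType]
  simp [add_comm]
  omega

end Helpers

section H2
variable {V : Type*} [Fintype V] [DecidableEq V]





lemma numCycles_eq (σ : Perm V) : numCycles σ = Multiset.card σ.cycleType := by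
  unfold numCycles
  have : Classical.decEq V = ‹DecidableEq V› := Subsingleton.elim _ _
  rw [this]

lemma cycle_sq_ne {c : Equiv.Perm V} (hc : c.IsCycle) (h3 : 3 ≤ c.support.card)
    {v : V} (hv : c v ≠ v) : c (c v) ≠ v := by
  intro h
  have horb : ∀ k : ℕ, (c ^ k) v = v ∨ (c ^ k) v = c v := by
    intro k
    induction k with
    | zero => simp
    | succ n ih =>
      rcases ih with h1 | h1
      · right; rw [pow_succ', Equiv.Perm.mul_apply, h1]
      · left; rw [pow_succ', Equiv.Perm.mul_apply, h1, h]
  have hsub : c.support ⊆ {v, c v} := by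
    intro w hw
    have hsc : c.SameCycle v w := hc.sameCycle hv (Equiv.Perm.mem_support.mp hw)
    obtain ⟨i, hi, rfl⟩ := hsc.exists_pow_eq'
    rcases horb i with h1 | h1 <;> simp [h1]
  have := Finset.card_le_card hsub
  have h2 : ({v, c v} : Finset V).card ≤ 2 := Finset.card_insert_le _ _ |>.trans (by simp)
  omega

lemma adj_next {r : V → V → Prop} (l : List V) (hnd : l.Nodup) (hne : l ≠ [])
    (hchain : l.Chain' r) (hwrap : r (l.getLast hne) (l.head hne)) :
    ∀ v (hv : v ∈ l), r v (l.next v hv) := by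
  intro v hv
  obtain ⟨i, hi⟩ := List.get_of_mem hv
  subst hi
  rw [show l.next (l.get i) hv = l.get ⟨(i.1 + 1) % l.length, Nat.mod_lt _ (i.1.zero_le.trans_lt i.2)⟩ from List.next_getElem l hnd i.1 i.2]
  rcases Nat.lt_or_ge (i.1 + 1) l.length with h | h
  · have heq : (⟨(i.1 + 1) % l.length, Nat.mod_lt _ (i.1.zero_le.trans_lt i.2)⟩ : Fin l.length)
        = ⟨i.1 + 1, h⟩ := Fin.ext (Nat.mod_eq_of_lt h)
    rw [heq]
    exact List.isChain_iff_getElem.mp hchain i.1 (by omega)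
  · have hlen : i.1 + 1 = l.length := by have := i.2; omega
    have h0 : (i.1 + 1) % l.length = 0 := by simp [hlen]
    have hL : l.get i = l.getLast hne := by
      rw [List.getLast_eq_getElem]
      simp only [List.get_eq_getElem]
      congr 1
      omega
    have hH : l.get ⟨(i.1 + 1) % l.length, Nat.mod_lt _ (i.1.zero_le.trans_lt i.2)⟩
        = l.head hne := by
      rw [List.head_eq_getElem_zero hne]
      simp only [List.get_eq_getElem]
      congr 1
    rw [hL, hH]
    exact hwrap



end H2


section Surgery2
variable {V : Type*} [Fintype V] [DecidableEq V]



lemma isTwoFactor_surgery (G : SimpleGraph V) (π : Perm V) (x : V)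
    (hfix : π x = x) (hadj : ∀ y : V, y ≠ x → G.Adj y (π y) ∧ π (π y) ≠ y)
    (l : List V) (ρ : Perm V) (hnd : l.Nodup) (hlen : 3 ≤ l.length)
    (hne : l ≠ []) (hxl : x ∈ l) (hchain : l.Chain' G.Adj)
    (hwrap : G.Adj (l.getLast hne) (l.head hne))
    (hρ_mem : ∀ v ∈ l, ρ v = v) (hρ_not : ∀ v, v ∉ l → ρ v = π v)
    (hclosed : ∀ v, v ∉ l → π v ∉ l) :
    IsTwoFactor G (l.formPerm * ρ) := by
  have hns : ∀ c : V, l ≠ [c] := by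
    intro c h
    rw [h] at hlen
    simp at hlen
  have hsupp : (l.formPerm).support = l.toFinset := List.support_formPerm_of_nodup l hnd hns
  have hcyc : (l.formPerm).IsCycle := List.isCycle_formPerm hnd (by omega)
  have hcard : (l.formPerm).support.card = l.length := by
    rw [hsupp, List.card_toFinset, hnd.dedup]
  have hmemne : ∀ v ∈ l, l.formPerm v ≠ v := by
    intro v hv
    have : v ∈ (l.formPerm).support := by rw [hsupp]; exact List.mem_toFinset.mpr hv
    exact Equiv.Perm.mem_support.mp this
  intro v
  by_cases hv : v ∈ l
  · have h1 : (l.formPerm * ρ) v = l.formPerm v := by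
      rw [Equiv.Perm.mul_apply, hρ_mem v hv]
    have hnext : l.formPerm v = l.next v hv := List.formPerm_apply_mem_eq_next hnd v hv
    have hadj1 : G.Adj v ((l.formPerm * ρ) v) := by
      rw [h1, hnext]
      exact adj_next l hnd hne hchain hwrap v hv
    refine ⟨hadj1, ?_⟩
    have hv2 : l.formPerm v ∈ l := List.formPerm_apply_mem_of_mem hv
    have h2 : (l.formPerm * ρ) ((l.formPerm * ρ) v) = l.formPerm (l.formPerm v) := by
      rw [h1, Equiv.Perm.mul_apply, hρ_mem _ hv2]
    rw [h2]
    exact cycle_sq_ne hcyc (hcard ▸ hlen) (hmemne v hv)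
  · have hvx : v ≠ x := fun h => hv (h ▸ hxl)
    have h1 : (l.formPerm * ρ) v = π v := by
      rw [Equiv.Perm.mul_apply, hρ_not v hv, List.formPerm_apply_of_notMem (hclosed v hv)]
    have hpv : π v ∉ l := hclosed v hv
    have hpvx : π v ≠ x := by
      intro h
      exact hvx (π.injective (h.trans hfix.symm))
    have h2 : (l.formPerm * ρ) ((l.formPerm * ρ) v) = π (π v) := by
      rw [h1, Equiv.Perm.mul_apply, hρ_not _ hpv, List.formPerm_apply_of_notMem (hclosed _ hpv)]
    exact ⟨h1 ▸ (hadj v hvx).1, h2 ▸ (hadj v hvx).2⟩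

lemma cycleType_surgery (l : List V) (ρ : Perm V) (hnd : l.Nodup) (hlen : 3 ≤ l.length)
    (hρ_mem : ∀ v ∈ l, ρ v = v) :
    Multiset.card (l.formPerm * ρ).cycleType = 1 + Multiset.card ρ.cycleType := by
  have hns : ∀ c : V, l ≠ [c] := by
    intro c h; rw [h] at hlen; simp at hlen
  have hcyc : (l.formPerm).IsCycle := List.isCycle_formPerm hnd (by omega)
  have hd : (l.formPerm).Disjoint ρ := by
    intro v
    by_cases hv : v ∈ l
    · right; exact hρ_mem v hv
    · left; exact List.formPerm_apply_of_notMem hv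
  rw [hd.cycleType_mul, hcyc.cycleType]
  simp [add_comm]

end Surgery2


section TL
variable {V : Type*} [Fintype V] [DecidableEq V]
set_option linter.unusedSectionVars false

variable {G : SimpleGraph V} {π : Perm V} {x : V}

lemma ne_x_apply_ne (hadj : ∀ y : V, y ≠ x → G.Adj y (π y) ∧ π (π y) ≠ y)
    {v : V} (hv : v ≠ x) : π v ≠ v := by
  intro h
  exact (hadj v hv).2 (by rw [h, h])

lemma apply_ne_x (hfix : π x = x) {v : V} (hv : v ≠ x) : π v ≠ x := by
  intro h
  exact hv (π.injective (h.trans hfix.symm))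

lemma card3_cycleOf (hfix : π x = x) (hadj : ∀ y : V, y ≠ x → G.Adj y (π y) ∧ π (π y) ≠ y)
    {w : V} (hw : w ≠ x) : 3 ≤ (π.cycleOf w).support.card := by
  have h1 : π w ≠ w := ne_x_apply_ne hadj hw
  have hws : w ∈ π.support := Equiv.Perm.mem_support.mpr h1
  have h2 : π (π w) ≠ π w := ne_x_apply_ne hadj (apply_ne_x hfix hw)
  have h3 : π (π w) ≠ w := (hadj w hw).2
  have hsub : ({w, π w, π (π w)} : Finset V) ⊆ (π.cycleOf w).support := by
    intro v hv
    simp only [Finset.mem_insert, Finset.mem_singleton] at hv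
    rw [Equiv.Perm.mem_support_cycleOf_iff]
    rcases hv with rfl | rfl | rfl
    · exact ⟨Equiv.Perm.SameCycle.refl _ _, hws⟩
    · exact ⟨Equiv.Perm.sameCycle_apply_right.mpr (Equiv.Perm.SameCycle.refl _ _), hws⟩
    · exact ⟨Equiv.Perm.sameCycle_apply_right.mpr
        (Equiv.Perm.sameCycle_apply_right.mpr (Equiv.Perm.SameCycle.refl _ _)), hws⟩
  have hcard : ({w, π w, π (π w)} : Finset V).card = 3 := by
    rw [Finset.card_insert_of_notMem (by simp [h1.symm, h3.symm]),
      Finset.card_insert_of_notMem (by simp [h2.symm])]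
    simp
  calc 3 = ({w, π w, π (π w)} : Finset V).card := hcard.symm
    _ ≤ _ := Finset.card_le_card hsub

lemma length_toList_ge (hfix : π x = x) (hadj : ∀ y : V, y ≠ x → G.Adj y (π y) ∧ π (π y) ≠ y)
    {w : V} (hw : w ≠ x) : 3 ≤ (π.toList w).length := by
  rw [Equiv.Perm.length_toList]
  exact card3_cycleOf hfix hadj hw

lemma x_not_mem_toList (hfix : π x = x) (w : V) : x ∉ π.toList w := by
  intro h
  rw [Equiv.Perm.mem_toList_iff] at h
  have hx : x ∉ π.support := by simp [Equiv.Perm.mem_support, hfix]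
  exact hx (h.1.mem_support_iff.mp h.2)

lemma mem_toList_iff' {w v : V} (hw : w ∈ π.support) :
    v ∈ π.toList w ↔ π.SameCycle w v := by
  rw [Equiv.Perm.mem_toList_iff]
  exact and_iff_left hw

lemma chain_adj_toList (hfix : π x = x) (hadj : ∀ y : V, y ≠ x → G.Adj y (π y) ∧ π (π y) ≠ y)
    (w : V) : (π.toList w).Chain' G.Adj := by
  rw [show (π.toList w).Chain' G.Adj ↔ List.IsChain G.Adj (π.toList w) from Iff.rfl, List.isChain_iff_getElem]
  intro i hi
  have hgi : (π.toList w).get ⟨i, by omega⟩ = (π ^ i) w := Equiv.Perm.getElem_toList π w i (by omega)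
  have hgi1 : (π.toList w).get ⟨i + 1, by omega⟩ = (π ^ (i+1)) w :=
    Equiv.Perm.getElem_toList π w (i+1) (by omega)
  have hmem : (π ^ i) w ∈ π.toList w := by
    rw [← hgi]; exact List.get_mem _ _
  have hne : (π ^ i) w ≠ x := fun h => x_not_mem_toList hfix w (h ▸ hmem)
  have := (hadj _ hne).1
  show G.Adj ((π.toList w).get ⟨i, by omega⟩) ((π.toList w).get ⟨i + 1, hi⟩)
  rw [hgi, hgi1, pow_succ', Equiv.Perm.mul_apply]
  exact this

lemma toList_ne_nil {w : V} (hw : w ∈ π.support) : π.toList w ≠ [] := by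
  simp [Equiv.Perm.toList_eq_nil_iff, hw]

lemma head_toList {w : V} (hw : w ∈ π.support) :
    (π.toList w).head (toList_ne_nil hw) = w := by
  have hlp : 0 < (π.toList w).length := List.length_pos_iff.mpr (toList_ne_nil hw)
  have h0 : (π.toList w).get ⟨0, hlp⟩ = (π ^ 0) w := Equiv.Perm.getElem_toList π w 0 hlp
  rw [List.get_eq_getElem] at h0
  rw [List.head_eq_getElem_zero]
  simpa using h0

lemma getLast_toList {w : V} (hw : w ∈ π.support) :
    (π.toList w).getLast (toList_ne_nil hw) = π⁻¹ w := by
  have hlp : 0 < (π.toList w).length := List.length_pos_iff.mpr (toList_ne_nil hw)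
  have hg : (π.toList w).get ⟨(π.toList w).length - 1, by omega⟩ = (π ^ ((π.toList w).length - 1)) w :=
    Equiv.Perm.getElem_toList π w ((π.toList w).length - 1) (by omega)
  rw [List.get_eq_getElem] at hg
  rw [List.getLast_eq_getElem, hg]
  apply π.injective
  have h1 : π ((π ^ ((π.toList w).length - 1)) w) = (π ^ (π.toList w).length) w := by
    rw [← Equiv.Perm.mul_apply, ← pow_succ']
    congr 2
    omega
  rw [h1, Equiv.Perm.length_toList]
  have h2 := Equiv.Perm.pow_mod_card_support_cycleOf_self_apply π ((π.cycleOf w).support.card) w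
  simp only [Nat.mod_self, pow_zero, Equiv.Perm.one_apply] at h2
  rw [← h2]
  simp

end TL

section Kernel
variable {V : Type*} [Fintype V] [DecidableEq V]

lemma not_sameCycle_fixed {π : Equiv.Perm V} {x w : V} (hfix : π x = x)
    (hws : w ∈ π.support) : ¬ π.SameCycle w x := by
  intro h
  have : x ∈ π.support := h.mem_support_iff.mp hws
  simp [Equiv.Perm.mem_support, hfix] at this

lemma surgery_contradiction (G : SimpleGraph V) (σ π : Equiv.Perm V) (x : V)
    (hσ : IsMinTwoFactor G σ)
    (hfix : π x = x) (hadj : ∀ y : V, y ≠ x → G.Adj y (π y) ∧ π (π y) ≠ y)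
    (hlt : numCycles π < numCycles σ)
    (l : List V) (ρ : Equiv.Perm V) (hnd : l.Nodup) (hlen : 3 ≤ l.length)
    (hne : l ≠ []) (hxl : x ∈ l) (hchain : l.Chain' G.Adj)
    (hwrap : G.Adj (l.getLast hne) (l.head hne))
    (hρ_mem : ∀ v ∈ l, ρ v = v) (hρ_not : ∀ v, v ∉ l → ρ v = π v)
    (hclosed : ∀ v, v ∉ l → π v ∉ l)
    (hcount : Multiset.card ρ.cycleType + 1 ≤ Multiset.card π.cycleType) : False := by
  have h2f := isTwoFactor_surgery G π x hfix hadj l ρ hnd hlen hne hxl hchain hwrap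
    hρ_mem hρ_not hclosed
  have hct := cycleType_surgery l ρ hnd hlen hρ_mem
  have hmin := hσ.2 _ h2f
  rw [numCycles_eq, numCycles_eq, hct] at hmin
  rw [numCycles_eq, numCycles_eq] at hlt
  omega

lemma case_one_cycle (G : SimpleGraph V) (σ π : Equiv.Perm V) (x : V)
    (hσ : IsMinTwoFactor G σ)
    (hfix : π x = x) (hadj : ∀ y : V, y ≠ x → G.Adj y (π y) ∧ π (π y) ≠ y)
    (hlt : numCycles π < numCycles σ)
    (w : V) (hw : w ≠ x)
    (l : List V) (hnd : l.Nodup) (hlen : 3 ≤ l.length)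
    (hne : l ≠ []) (hchain : l.Chain' G.Adj)
    (hwrap : G.Adj (l.getLast hne) (l.head hne))
    (hmem_iff : ∀ v, v ∈ l ↔ v = x ∨ π.SameCycle w v) : False := by
  have hwne : π w ≠ w := ne_x_apply_ne hadj hw
  have hws : w ∈ π.support := Equiv.Perm.mem_support.mpr hwne
  refine surgery_contradiction G σ π x hσ hfix hadj hlt l (π * (π.cycleOf w)⁻¹)
    hnd hlen hne ((hmem_iff x).mpr (Or.inl rfl)) hchain hwrap ?_ ?_ ?_ ?_
  · intro v hv
    rcases (hmem_iff v).mp hv with rfl | hsc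
    · rw [rho1_apply, if_neg (not_sameCycle_fixed hfix hws), hfix]
    · rw [rho1_apply, if_pos hsc]
  · intro v hv
    rw [hmem_iff] at hv
    push_neg at hv
    rw [rho1_apply, if_neg hv.2]
  · intro v hv hv2
    rw [hmem_iff] at hv hv2
    push_neg at hv
    rcases hv2 with h | h
    · exact apply_ne_x hfix hv.1 h
    · exact hv.2 (Equiv.Perm.sameCycle_apply_right.mp h)
  · rw [card_cycleType_rho1 π w hwne]

lemma case_two_cycles (G : SimpleGraph V) (σ π : Equiv.Perm V) (x : V)
    (hσ : IsMinTwoFactor G σ)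
    (hfix : π x = x) (hadj : ∀ y : V, y ≠ x → G.Adj y (π y) ∧ π (π y) ≠ y)
    (hlt : numCycles π < numCycles σ)
    (w z : V) (hw : w ≠ x) (hz : z ≠ x) (hnc : ¬ π.SameCycle w z)
    (l : List V) (hnd : l.Nodup) (hlen : 3 ≤ l.length)
    (hne : l ≠ []) (hchain : l.Chain' G.Adj)
    (hwrap : G.Adj (l.getLast hne) (l.head hne))
    (hmem_iff : ∀ v, v ∈ l ↔ v = x ∨ π.SameCycle w v ∨ π.SameCycle z v) : False := by
  have hwne : π w ≠ w := ne_x_apply_ne hadj hw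
  have hzne : π z ≠ z := ne_x_apply_ne hadj hz
  have hws : w ∈ π.support := Equiv.Perm.mem_support.mpr hwne
  have hzs : z ∈ π.support := Equiv.Perm.mem_support.mpr hzne
  refine surgery_contradiction G σ π x hσ hfix hadj hlt l
    (π * (π.cycleOf w)⁻¹ * (π.cycleOf z)⁻¹)
    hnd hlen hne ((hmem_iff x).mpr (Or.inl rfl)) hchain hwrap ?_ ?_ ?_ ?_
  · intro v hv
    rcases (hmem_iff v).mp hv with rfl | hsc | hsc
    · rw [rho2_apply π w z hnc,
        if_neg (by push_neg; exact ⟨not_sameCycle_fixed hfix hws, not_sameCycle_fixed hfix hzs⟩),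
        hfix]
    · rw [rho2_apply π w z hnc, if_pos (Or.inl hsc)]
    · rw [rho2_apply π w z hnc, if_pos (Or.inr hsc)]
  · intro v hv
    rw [hmem_iff] at hv
    push_neg at hv
    rw [rho2_apply π w z hnc, if_neg (by push_neg; exact ⟨hv.2.1, hv.2.2⟩)]
  · intro v hv hv2
    rw [hmem_iff] at hv hv2
    push_neg at hv
    rcases hv2 with h | h | h
    · exact apply_ne_x hfix hv.1 h
    · exact hv.2.1 (Equiv.Perm.sameCycle_apply_right.mp h)
    · exact hv.2.2 (Equiv.Perm.sameCycle_apply_right.mp h)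
  · have := card_cycleType_rho2 π w z hwne hzne hnc
    omega

end Kernel

section Cases
variable {V : Type*} [Fintype V] [DecidableEq V]

lemma caseA (G : SimpleGraph V) (σ π : Equiv.Perm V) (x : V)
    (hσ : IsMinTwoFactor G σ)
    (hfix : π x = x) (hadj : ∀ y : V, y ≠ x → G.Adj y (π y) ∧ π (π y) ≠ y)
    (hlt : numCycles π < numCycles σ)
    {y : V} (hy : G.Adj x y) (hA : G.Adj x (π y)) : False := by
  have hyx : y ≠ x := hy.ne'
  have hw : π y ≠ x := apply_ne_x hfix hyx
  have hws : π y ∈ π.support := Equiv.Perm.mem_support.mpr (ne_x_apply_ne hadj hw)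
  have hLne : π.toList (π y) ≠ [] := toList_ne_nil hws
  have hne : (x :: π.toList (π y)) ≠ [] := List.cons_ne_nil _ _
  refine case_one_cycle G σ π x hσ hfix hadj hlt (π y) hw (x :: π.toList (π y))
    (List.nodup_cons.mpr ⟨x_not_mem_toList hfix _, Equiv.Perm.nodup_toList π _⟩)
    (by have := length_toList_ge hfix hadj hw; rw [List.length_cons]; omega)
    hne ?_ ?_ ?_
  · refine List.isChain_cons.mpr ⟨?_, chain_adj_toList hfix hadj _⟩
    intro u hu
    rw [List.head?_eq_head hLne, head_toList hws] at hu
    obtain rfl : π y = u := by injection hu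
    exact hA
  · have h1 : (x :: π.toList (π y)).getLast hne = (π.toList (π y)).getLast hLne :=
      List.getLast_cons hLne
    rw [h1, getLast_toList hws, List.head_cons]
    simp only [← Equiv.Perm.mul_apply, inv_mul_cancel, Equiv.Perm.one_apply]
    exact hy.symm
  · intro v
    rw [List.mem_cons, mem_toList_iff' hws]

lemma caseC (G : SimpleGraph V) (σ π : Equiv.Perm V) (x : V)
    (hσ : IsMinTwoFactor G σ)
    (hfix : π x = x) (hadj : ∀ y : V, y ≠ x → G.Adj y (π y) ∧ π (π y) ≠ y)
    (hlt : numCycles π < numCycles σ)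
    {y z : V} (hy : G.Adj x y) (hz : G.Adj x z)
    (hnc : ¬ π.SameCycle (π y) (π z))
    (hA : G.Adj (π y) (π z)) : False := by
  have hyx : y ≠ x := hy.ne'
  have hzx : z ≠ x := hz.ne'
  have hwa : π y ≠ x := apply_ne_x hfix hyx
  have hwb : π z ≠ x := apply_ne_x hfix hzx
  have has : π y ∈ π.support := Equiv.Perm.mem_support.mpr (ne_x_apply_ne hadj hwa)
  have hbs : π z ∈ π.support := Equiv.Perm.mem_support.mpr (ne_x_apply_ne hadj hwb)
  have hAne : π.toList (π y) ≠ [] := toList_ne_nil has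
  have hBne : π.toList (π z) ≠ [] := toList_ne_nil hbs
  have hArne : (π.toList (π y)).reverse ≠ [] := by simpa using hAne
  have habne : (π.toList (π y)).reverse ++ π.toList (π z) ≠ [] := by simp [hAne]
  have hne : (x :: ((π.toList (π y)).reverse ++ π.toList (π z))) ≠ [] := List.cons_ne_nil _ _
  have hdisj : (π.toList (π y)).Disjoint (π.toList (π z)) := by
    intro v hvA hvB
    rw [mem_toList_iff' has] at hvA
    rw [mem_toList_iff' hbs] at hvB
    exact hnc (hvA.trans hvB.symm)
  refine case_two_cycles G σ π x hσ hfix hadj hlt (π y) (π z) hwa hwb hnc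
    (x :: ((π.toList (π y)).reverse ++ π.toList (π z))) ?_ ?_ hne ?_ ?_ ?_
  · refine List.nodup_cons.mpr ⟨?_, ?_⟩
    · simp only [List.mem_append, List.mem_reverse]
      push_neg
      exact ⟨x_not_mem_toList hfix _, x_not_mem_toList hfix _⟩
    · exact List.nodup_append'.mpr ⟨List.nodup_reverse.mpr (Equiv.Perm.nodup_toList π _),
        Equiv.Perm.nodup_toList π _, List.disjoint_reverse_left.mpr hdisj⟩
  · have h1 := length_toList_ge hfix hadj hwa
    rw [List.length_cons, List.length_append, List.length_reverse]
    omega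
  · refine List.isChain_cons.mpr ⟨?_, ?_⟩
    · intro u hu
      rw [List.head?_eq_head habne, List.head_append_of_ne_nil hArne,
        List.head_reverse, getLast_toList has] at hu
      obtain rfl : π⁻¹ (π y) = u := by injection hu
      simpa using hy
    · refine List.isChain_append.mpr ⟨?_, chain_adj_toList hfix hadj _, ?_⟩
      · rw [List.isChain_reverse]
        exact (chain_adj_toList hfix hadj (π y)).imp (fun a b h => h.symm)
      · intro u hu v hv
        rw [List.getLast?_eq_getLast_of_ne_nil hArne, List.getLast_reverse] at hu
        rw [List.head?_eq_head hBne, head_toList hbs] at hv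
        have head_eq : (π.toList (π y)).head (by simpa using hAne) = π y := head_toList has
        rw [head_eq] at hu
        obtain rfl : π y = u := by injection hu
        obtain rfl : π z = v := by injection hv
        exact hA
  · have h1 : (x :: ((π.toList (π y)).reverse ++ π.toList (π z))).getLast hne
        = ((π.toList (π y)).reverse ++ π.toList (π z)).getLast habne :=
      List.getLast_cons habne
    rw [h1, List.getLast_append_of_ne_nil _ hBne, getLast_toList hbs, List.head_cons]
    simp only [← Equiv.Perm.mul_apply, inv_mul_cancel, Equiv.Perm.one_apply]
    exact hz.symm
  · intro v
    simp only [List.mem_cons, List.mem_append, List.mem_reverse]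
    rw [mem_toList_iff' has, mem_toList_iff' hbs]

end Cases

section CaseB
variable {V : Type*} [Fintype V] [DecidableEq V]

lemma caseB (G : SimpleGraph V) (σ π : Equiv.Perm V) (x : V)
    (hσ : IsMinTwoFactor G σ)
    (hfix : π x = x) (hadj : ∀ y : V, y ≠ x → G.Adj y (π y) ∧ π (π y) ≠ y)
    (hlt : numCycles π < numCycles σ)
    {y z : V} (hy : G.Adj x y) (hz : G.Adj x z) (hyz : y ≠ z)
    (hsc : π.SameCycle (π y) (π z))
    (hA : G.Adj (π y) (π z)) : False := by
  have hyx : y ≠ x := hy.ne'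
  have hzx : z ≠ x := hz.ne'
  have hwb : π z ≠ x := apply_ne_x hfix hzx
  have hbs : π z ∈ π.support := Equiv.Perm.mem_support.mpr (ne_x_apply_ne hadj hwb)
  -- the cycle list starting at π z
  have hLnd : (π.toList (π z)).Nodup := Equiv.Perm.nodup_toList π _
  have hLne : π.toList (π z) ≠ [] := toList_ne_nil hbs
  have hby : π.SameCycle (π z) y := (hsc.symm).trans ⟨-1, by simp⟩
  have hyL : y ∈ π.toList (π z) := (mem_toList_iff' hbs).mpr hby
  have hxL : x ∉ π.toList (π z) := x_not_mem_toList hfix _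
  have hlenL : 3 ≤ (π.toList (π z)).length := length_toList_ge hfix hadj hwb
  set L := π.toList (π z) with hLdef
  have hgetL : ∀ (k : ℕ) (hk : k < L.length), L[k] = (π ^ k) (π z) := by
    intro k hk
    have : L.get ⟨k, hk⟩ = (π ^ k) (π z) := Equiv.Perm.getElem_toList π (π z) k hk
    rwa [List.get_eq_getElem] at this
  have hlast : L.getLast hLne = z := by
    have h := getLast_toList hbs
    simp only [← Equiv.Perm.mul_apply, inv_mul_cancel, Equiv.Perm.one_apply] at h
    exact h
  set i := L.idxOf y with hidef
  have hi : i < L.length := List.idxOf_lt_length_iff.mpr hyL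
  have hgi : L[i] = y := by
    have := List.idxOf_get (a := y) (l := L) hi
    rwa [List.get_eq_getElem] at this
  have hi1 : i + 1 < L.length := by
    rcases Nat.lt_or_ge (i+1) L.length with h | h
    · exact h
    · exfalso
      have hieq : i = L.length - 1 := by omega
      have h2 : L.getLast hLne = y := by
        rw [List.getLast_eq_getElem]
        convert hgi using 2
        omega
      rw [hlast] at h2
      exact hyz h2.symm
  set P := L.take (i+1) with hPdef
  set Q := L.drop (i+1) with hQdef
  have hPQ : P ++ Q = L := List.take_append_drop _ _
  have hlenP : P.length = i + 1 := by
    rw [hPdef, List.length_take]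
    omega
  have hlenQ : Q.length = L.length - (i+1) := by rw [hQdef, List.length_drop]
  have hPne : P ≠ [] := by
    intro h
    rw [h] at hlenP
    simp at hlenP
  have hQne : Q ≠ [] := by
    intro h
    rw [h] at hlenQ
    simp at hlenQ
    omega
  have hPrne : P.reverse ≠ [] := by simpa using hPne
  have hPQne : P.reverse ++ Q ≠ [] := by simp [hPne]
  have hne : (x :: (P.reverse ++ Q)) ≠ [] := List.cons_ne_nil _ _
  -- endpoints
  have hheadP : P.head hPne = π z := by
    rw [List.head_eq_getElem_zero]
    show (L.take (i+1))[0]'(by rw [List.length_take]; omega) = π z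
    rw [List.getElem_take]
    have := hgetL 0 (by omega)
    simpa using this
  have hlastP : P.getLast hPne = y := by
    rw [List.getLast_eq_getElem]
    show (L.take (i+1))[P.length - 1]'(by rw [List.length_take]; omega) = y
    rw [List.getElem_take]
    convert hgi using 2
    omega
  have hgL1 : L[i+1]'hi1 = π y := by
    rw [hgetL (i+1) hi1, pow_succ', Equiv.Perm.mul_apply, ← hgetL i hi, hgi]
  have hheadQ : Q.head hQne = π y := by
    rw [List.head_eq_getElem_zero]
    show (L.drop (i+1))[0]'(by rw [List.length_drop]; omega) = π y
    rw [List.getElem_drop]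
    convert hgL1 using 2
  have hz2 : L[L.length - 1]'(by omega) = z := by
    rw [List.getLast_eq_getElem] at hlast; exact hlast
  have hlastQ : Q.getLast hQne = z := by
    rw [List.getLast_eq_getElem]
    show (L.drop (i+1))[Q.length - 1]'(by rw [List.length_drop]; omega) = z
    rw [List.getElem_drop]
    convert hz2 using 2
    omega
  -- nodup pieces
  have hndPQ : (P ++ Q).Nodup := hPQ.symm ▸ hLnd
  obtain ⟨hndP, hndQ, hdisjPQ⟩ := List.nodup_append'.mp hndPQ
  have hmemPQ : ∀ v, (v ∈ P.reverse ++ Q) ↔ v ∈ L := by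
    intro v
    rw [← hPQ]
    simp [List.mem_append, List.mem_reverse]
  -- chains
  have hchainL : L.Chain' G.Adj := chain_adj_toList hfix hadj _
  have hchainP : P.Chain' G.Adj := hPdef ▸ hchainL.take _
  have hchainQ : Q.Chain' G.Adj := hQdef ▸ hchainL.drop _
  refine case_one_cycle G σ π x hσ hfix hadj hlt (π z) hwb (x :: (P.reverse ++ Q))
    ?_ ?_ hne ?_ ?_ ?_
  · refine List.nodup_cons.mpr ⟨fun h => hxL ((hmemPQ x).mp h), ?_⟩
    exact List.nodup_append'.mpr ⟨List.nodup_reverse.mpr hndP, hndQ,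
      List.disjoint_reverse_left.mpr hdisjPQ⟩
  · rw [List.length_cons, List.length_append, List.length_reverse, hlenP, hlenQ]
    omega
  · refine List.isChain_cons.mpr ⟨?_, ?_⟩
    · intro u hu
      rw [List.head?_eq_head hPQne, List.head_append_of_ne_nil hPrne,
        List.head_reverse, hlastP] at hu
      obtain rfl : y = u := by injection hu
      exact hy
    · refine List.isChain_append.mpr ⟨?_, hchainQ, ?_⟩
      · rw [List.isChain_reverse]
        exact hchainP.imp (fun a b h => h.symm)
      · intro u hu v hv
        rw [List.getLast?_eq_getLast_of_ne_nil hPrne, List.getLast_reverse, hheadP] at hu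
        rw [List.head?_eq_head hQne, hheadQ] at hv
        obtain rfl : π z = u := by injection hu
        obtain rfl : π y = v := by injection hv
        exact hA.symm
  · have h1 : (x :: (P.reverse ++ Q)).getLast hne = (P.reverse ++ Q).getLast hPQne :=
      List.getLast_cons hPQne
    rw [h1, List.getLast_append_of_ne_nil _ hQne, hlastQ, List.head_cons]
    exact hz.symm
  · intro v
    rw [List.mem_cons, hmemPQ v, hLdef, mem_toList_iff' hbs]

end CaseB

theorem stmt2 {V : Type*} [Fintype V] (G : SimpleGraph V) (σ : Equiv.Perm V)
    (hσ : IsMinTwoFactor G σ) (x : V) (hx : CoAbsorbable G σ x) :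
    vdeg G x + 1 ≤ _root_.indepNum G := by
  classical
  obtain ⟨π, ⟨hfix, hadj⟩, hlt⟩ := hx
  have hNfin : (G.neighborSet x).Finite := Set.toFinite _
  set N : Finset V := hNfin.toFinset with hNdef
  have hNmem : ∀ v, v ∈ N ↔ G.Adj x v := by
    intro v
    rw [hNdef, Set.Finite.mem_toFinset]
    rfl
  have hvdeg : vdeg G x = N.card := by
    rw [vdeg, Nat.card_coe_set_eq, Set.ncard_eq_toFinset_card _ hNfin]
  have hxim : x ∉ N.image π := by
    intro h
    obtain ⟨y, hy, hyx⟩ := Finset.mem_image.mp h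
    have : y = x := π.injective (hyx.trans hfix.symm)
    subst this
    exact G.loopless.irrefl y ((hNmem y).mp hy)
  set S : Finset V := insert x (N.image π) with hSdef
  have hcardS : S.card = N.card + 1 := by
    rw [hSdef, Finset.card_insert_of_notMem hxim,
      Finset.card_image_of_injective _ π.injective]
  have hmemS : ∀ v, v ∈ S ↔ v = x ∨ ∃ y, G.Adj x y ∧ v = π y := by
    intro v
    rw [hSdef, Finset.mem_insert, Finset.mem_image]
    constructor
    · rintro (rfl | ⟨y, hy, rfl⟩)
      · exact Or.inl rfl
      · exact Or.inr ⟨y, (hNmem y).mp hy, rfl⟩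
    · rintro (rfl | ⟨y, hy, rfl⟩)
      · exact Or.inl rfl
      · exact Or.inr ⟨y, (hNmem y).mpr hy, rfl⟩
  have hindep : _root_.IsIndepSet G (↑S : Set V) := by
    intro u hu v hv huv
    rw [Finset.mem_coe] at hu hv
    rcases (hmemS u).mp hu with hux | ⟨a, ha, hua⟩
    · rcases (hmemS v).mp hv with hvx | ⟨b, hb, hvb⟩
      · subst hux; subst hvx; exact G.loopless.irrefl _ huv
      · subst hux; subst hvb
        exact caseA G σ π u hσ hfix hadj hlt hb huv
    · rcases (hmemS v).mp hv with hvx | ⟨b, hb, hvb⟩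
      · subst hvx; subst hua
        exact caseA G σ π v hσ hfix hadj hlt ha huv.symm
      · subst hua; subst hvb
        have hab : a ≠ b := by
          rintro rfl
          exact G.loopless.irrefl _ huv
        by_cases hsc : π.SameCycle (π a) (π b)
        · exact caseB G σ π x hσ hfix hadj hlt ha hb hab hsc huv
        · exact caseC G σ π x hσ hfix hadj hlt ha hb hsc huv
  have hbdd : BddAbove {n | ∃ s : Finset V, _root_.IsIndepSet G ↑s ∧ s.card = n} := by
    refine ⟨Fintype.card V, ?_⟩
    rintro n ⟨s, _, rfl⟩
    exact Finset.card_le_univ s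
  have hle : S.card ≤ _root_.indepNum G := le_csSup hbdd ⟨S, hindep, rfl⟩
  rw [hvdeg, ← hcardS]
  exact hle
end

section
/- Let F be a 2-factor of a graph G with the minimum number of components, and let C and D be two distinct cycles of F. If x ∈ V(C) and y ∈ V(D) are adjacent in G, then there is no edge of G between {x⁻, x⁺} and {y⁻, y⁺}, where x⁺, x⁻ denote the successor and predecessor of x on its cycle (with fixed orientations). -/
open SimpleGraph

section Aux

open Equiv Equiv.Perm

private lemma hpow_aux {V : Type*} (τ : Equiv.Perm V) (k : ℕ) (v : V) :
    τ.SameCycle v ((τ ^ k) (τ v)) :=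
  ⟨(k : ℤ) + 1, by rw [zpow_add_one, Equiv.Perm.mul_apply, zpow_natCast]⟩


private lemma numCycles_merge {V : Type*} [Fintype V] (σ : Equiv.Perm V) (x w : V)
    (hx : σ x ≠ x) (hw : σ w ≠ w) (hxw : ¬ σ.SameCycle x w) :
    numCycles (σ * @Equiv.swap V (Classical.decEq V) x w) < numCycles σ := by
  letI : DecidableEq V := Classical.decEq V
  have hne : x ≠ w := fun h => hxw (h ▸ SameCycle.refl σ x)
  set c₁ := σ.cycleOf x with hc₁def
  set c₂ := σ.cycleOf w with hc₂def
  set s := Equiv.swap x w with hsdef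
  set ρ := c₂⁻¹ * (c₁⁻¹ * σ) with hρdef
  have hPx : ∀ z, σ.SameCycle x z → ¬ σ.SameCycle w z := fun z h1 h2 => hxw (h1.trans h2.symm)
  have happ1 : ∀ z, c₁ z = if σ.SameCycle x z then σ z else z := fun z => σ.cycleOf_apply x z
  have happ2 : ∀ z, c₂ z = if σ.SameCycle w z then σ z else z := fun z => σ.cycleOf_apply w z
  have hinv1 : ∀ z, c₁⁻¹ z = if σ.SameCycle x z then σ⁻¹ z else z := by
    intro z
    rw [hc₁def, cycleOf_inv, cycleOf_apply]
    simp [sameCycle_inv]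
  have hinv2 : ∀ z, c₂⁻¹ z = if σ.SameCycle w z then σ⁻¹ z else z := by
    intro z
    rw [hc₂def, cycleOf_inv, cycleOf_apply]
    simp [sameCycle_inv]
  have hρapp : ∀ z, ρ z = if σ.SameCycle x z ∨ σ.SameCycle w z then z else σ z := by
    intro z
    simp only [hρdef, Equiv.Perm.mul_apply]
    by_cases h1 : σ.SameCycle x z
    · rw [hinv1 (σ z), if_pos (sameCycle_apply_right.2 h1), (Equiv.Perm.inv_eq_iff_eq.mpr rfl : σ⁻¹ (σ z) = z),
        hinv2 z, if_neg (hPx z h1), if_pos (Or.inl h1)]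
    · by_cases h2 : σ.SameCycle w z
      · rw [hinv1 (σ z), if_neg (fun hh => h1 (sameCycle_apply_right.1 hh)), hinv2 (σ z),
          if_pos (sameCycle_apply_right.2 h2), (Equiv.Perm.inv_eq_iff_eq.mpr rfl : σ⁻¹ (σ z) = z), if_pos (Or.inr h2)]
      · rw [hinv1 (σ z), if_neg (fun hh => h1 (sameCycle_apply_right.1 hh)),
          hinv2 (σ z), if_neg (fun hh => h2 (sameCycle_apply_right.1 hh)),
          if_neg (fun hh => hh.elim h1 h2)]
  set g := c₁ * (c₂ * s) with hgdef
  have hnxsw : ¬ σ.SameCycle x (σ w) :=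
    fun hh => hxw (sameCycle_apply_right.1 hh)
  have hnwsx : ¬ σ.SameCycle w (σ x) :=
    fun hh => hPx (σ x) (sameCycle_apply_right.2 (SameCycle.refl σ x)) hh
  have hgx : g x = σ w := by
    simp only [hgdef, Equiv.Perm.mul_apply, hsdef, Equiv.swap_apply_left]
    rw [happ2 w, if_pos (SameCycle.refl σ w), happ1 (σ w), if_neg hnxsw]
  have hgw : g w = σ x := by
    simp only [hgdef, Equiv.Perm.mul_apply, hsdef, Equiv.swap_apply_right]
    rw [happ2 x, if_neg (fun hh => hPx x (SameCycle.refl σ x) hh), happ1 x,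
      if_pos (SameCycle.refl σ x)]
  have hgother : ∀ z, z ≠ x → z ≠ w →
      g z = if σ.SameCycle x z ∨ σ.SameCycle w z then σ z else z := by
    intro z h1 h2
    simp only [hgdef, Equiv.Perm.mul_apply, hsdef, Equiv.swap_apply_of_ne_of_ne h1 h2]
    by_cases hz1 : σ.SameCycle x z
    · rw [happ2 z, if_neg (hPx z hz1), happ1 z, if_pos hz1, if_pos (Or.inl hz1)]
    · by_cases hz2 : σ.SameCycle w z
      · rw [happ2 z, if_pos hz2, happ1 (σ z),
          if_neg (fun hh => hz1 (sameCycle_apply_right.1 hh)), if_pos (Or.inr hz2)]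
      · rw [happ2 z, if_neg hz2, happ1 z, if_neg hz1, if_neg (fun hh => hh.elim hz1 hz2)]
  have hσdec : σ = (c₁ * c₂) * ρ := by rw [hρdef]; group
  have hd12 : Disjoint c₁ c₂ := by
    intro z
    by_cases h1 : σ.SameCycle x z
    · right; rw [happ2, if_neg (hPx z h1)]
    · left; rw [happ1, if_neg h1]
  have hd : Disjoint (c₁ * c₂) ρ := by
    intro z
    by_cases h : σ.SameCycle x z ∨ σ.SameCycle w z
    · right; rw [hρapp, if_pos h]
    · left
      push_neg at h
      rw [Equiv.Perm.mul_apply, happ2, if_neg h.2, happ1, if_neg h.1]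
  have hdg : Disjoint g ρ := by
    intro z
    by_cases h : σ.SameCycle x z ∨ σ.SameCycle w z
    · right; rw [hρapp, if_pos h]
    · left
      push_neg at h
      have hzx : z ≠ x := fun e => h.1 (e ▸ SameCycle.refl σ x)
      have hzw : z ≠ w := fun e => h.2 (e ▸ SameCycle.refl σ w)
      rw [hgother z hzx hzw, if_neg (not_or.2 h)]
  have hds : Disjoint ρ s := by
    intro z
    by_cases hz1 : z = x
    · left; subst hz1; rw [hρapp, if_pos (Or.inl (SameCycle.refl σ z))]
    · by_cases hz2 : z = w
      · left; subst hz2; rw [hρapp, if_pos (Or.inr (SameCycle.refl σ z))]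
      · right; exact Equiv.swap_apply_of_ne_of_ne hz1 hz2
  have hτdec : σ * s = g * ρ := by
    calc σ * s = ((c₁ * c₂) * ρ) * s := by rw [← hσdec]
    _ = (c₁ * c₂) * (ρ * s) := by rw [mul_assoc]
    _ = (c₁ * c₂) * (s * ρ) := by rw [hds.commute.eq]
    _ = g * ρ := by rw [hgdef]; group
  -- reachability
  have hstep : ∀ b, g.SameCycle x b → g b = σ b → g.SameCycle x (σ b) := by
    intro b h1 h2
    exact h1.trans ⟨1, by simpa using h2⟩
  have hchainW : ∀ k : ℕ, g.SameCycle x ((σ ^ k) (σ w)) := by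
    intro k
    induction k with
    | zero => exact ⟨1, by simpa using hgx⟩
    | succ k ih =>
      have hb : σ.SameCycle w ((σ ^ k) (σ w)) := hpow_aux σ k w
      rw [pow_succ', Equiv.Perm.mul_apply]
      by_cases hbw : (σ ^ k) (σ w) = w
      · rw [hbw]; exact ⟨1, by simpa using hgx⟩
      · have hbx : (σ ^ k) (σ w) ≠ x := fun e => hxw ((e ▸ hb).symm)
        exact hstep _ ih (by rw [hgother _ hbx hbw, if_pos (Or.inr hb)])
  have hswP : σ.SameCycle (σ w) w := ⟨-1, by simp⟩
  have hxwreach : g.SameCycle x w := by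
    obtain ⟨i, _, hi⟩ := hswP.exists_pow_eq'
    have h := hchainW i
    rwa [hi] at h
  have hsxreach : g.SameCycle x (σ x) := hxwreach.trans ⟨1, by simpa using hgw⟩
  have hchainX : ∀ k : ℕ, g.SameCycle x ((σ ^ k) (σ x)) := by
    intro k
    induction k with
    | zero => simpa using hsxreach
    | succ k ih =>
      have hb : σ.SameCycle x ((σ ^ k) (σ x)) := hpow_aux σ k x
      rw [pow_succ', Equiv.Perm.mul_apply]
      by_cases hbx : (σ ^ k) (σ x) = x
      · rw [hbx]; simpa using hsxreach
      · have hbw : (σ ^ k) (σ x) ≠ w := fun e => hxw (e ▸ hb)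
        exact hstep _ ih (by rw [hgother _ hbx hbw, if_pos (Or.inl hb)])
  have hwsw : σ.SameCycle w (σ w) := ⟨1, by simp⟩
  have hgxne : σ w ≠ x := fun e => hxw (e ▸ hwsw).symm
  have hgcyc : IsCycle g := by
    refine ⟨x, by rw [hgx]; exact hgxne, ?_⟩
    intro b hb
    have hbmem : σ.SameCycle x b ∨ σ.SameCycle w b := by
      by_contra hcon
      push_neg at hcon
      have hbx : b ≠ x := fun e => hcon.1 (e ▸ SameCycle.refl σ x)
      have hbw : b ≠ w := fun e => hcon.2 (e ▸ SameCycle.refl σ w)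
      exact hb (by rw [hgother b hbx hbw, if_neg (not_or.2 hcon)])
    rcases hbmem with h | h
    · obtain ⟨i, _, hi⟩ := h.exists_pow_eq'
      cases i with
      | zero => rw [← hi]; exact SameCycle.refl g x
      | succ k =>
        rw [← hi, pow_succ, Equiv.Perm.mul_apply]
        exact hchainX k
    · obtain ⟨i, _, hi⟩ := h.exists_pow_eq'
      cases i with
      | zero => rw [← hi]; exact hxwreach
      | succ k =>
        rw [← hi, pow_succ, Equiv.Perm.mul_apply]
        exact hchainW k
  -- counting
  have hc1cyc : IsCycle c₁ := isCycle_cycleOf σ hx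
  have hc2cyc : IsCycle c₂ := isCycle_cycleOf σ hw
  unfold numCycles
  rw [hτdec, Equiv.Perm.Disjoint.cycleType_mul hdg, hσdec, Equiv.Perm.Disjoint.cycleType_mul hd, Equiv.Perm.Disjoint.cycleType_mul hd12, Multiset.card_add,
    Multiset.card_add, Multiset.card_add, card_cycleType_eq_one.2 hgcyc,
    card_cycleType_eq_one.2 hc1cyc, card_cycleType_eq_one.2 hc2cyc]
  omega

/-- Reverse the cycle of `v` in `σ`. -/
private lemma reverse_cycle {V : Type*} [Fintype V] (G : SimpleGraph V) (σ : Equiv.Perm V)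
    (hσ : IsTwoFactor G σ) (v : V) :
    ∃ σ' : Equiv.Perm V, IsTwoFactor G σ' ∧ numCycles σ' = numCycles σ ∧
      (∀ z, σ.SameCycle v z → σ' z = σ⁻¹ z) ∧
      (∀ z, ¬ σ.SameCycle v z → σ' z = σ z) ∧
      (∀ a b : V, σ'.SameCycle a b → σ.SameCycle a b) := by
  letI : DecidableEq V := Classical.decEq V
  have hfree : ∀ z : V, σ z ≠ z := fun z => (hσ z).1.ne'
  set c := σ.cycleOf v with hcdef
  set ρ := c⁻¹ * σ with hρdef
  have happ : ∀ z, c z = if σ.SameCycle v z then σ z else z := fun z => σ.cycleOf_apply v z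
  have hinv : ∀ z, c⁻¹ z = if σ.SameCycle v z then σ⁻¹ z else z := by
    intro z
    rw [hcdef, cycleOf_inv, cycleOf_apply]
    simp [sameCycle_inv]
  have hρapp : ∀ z, ρ z = if σ.SameCycle v z then z else σ z := by
    intro z
    simp only [hρdef, Equiv.Perm.mul_apply]
    by_cases h : σ.SameCycle v z
    · rw [hinv (σ z), if_pos (sameCycle_apply_right.2 h), (Equiv.Perm.inv_eq_iff_eq.mpr rfl : σ⁻¹ (σ z) = z), if_pos h]
    · rw [hinv (σ z), if_neg (fun hh => h (sameCycle_apply_right.1 hh)), if_neg h]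
  refine ⟨c⁻¹ * ρ, ?_, ?_, ?_, ?_, ?_⟩
  · -- IsTwoFactor
    intro z
    by_cases h : σ.SameCycle v z
    · have h1 : (c⁻¹ * ρ) z = σ⁻¹ z := by
        rw [Equiv.Perm.mul_apply, hρapp, if_pos h, hinv, if_pos h]
      have h2 : (c⁻¹ * ρ) (σ⁻¹ z) = σ⁻¹ (σ⁻¹ z) := by
        rw [Equiv.Perm.mul_apply, hρapp,
          if_pos (h.trans ⟨-1, by simp⟩), hinv, if_pos (h.trans ⟨-1, by simp⟩)]
      constructor
      · rw [h1]
        simpa using (hσ (σ⁻¹ z)).1.symm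
      · rw [h1, h2]
        intro he
        have h3 : z = σ (σ z) := by simpa using congrArg (fun u => σ (σ u)) he
        exact (hσ z).2 h3.symm
    · have h1 : (c⁻¹ * ρ) z = σ z := by
        rw [Equiv.Perm.mul_apply, hρapp, if_neg h, hinv,
          if_neg (fun hh => h (sameCycle_apply_right.1 hh))]
      have h2 : (c⁻¹ * ρ) (σ z) = σ (σ z) := by
        rw [Equiv.Perm.mul_apply, hρapp,
          if_neg (fun hh => h (sameCycle_apply_right.1 hh)), hinv,
          if_neg (fun hh => h (sameCycle_apply_right.1 (sameCycle_apply_right.1 hh)))]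
      exact ⟨h1 ▸ (hσ z).1, by rw [h1, h2]; exact (hσ z).2⟩
  · -- numCycles
    by_cases hv : σ v = v
    · have hc1 : c = 1 := by rw [hcdef, cycleOf_eq_one_iff]; exact hv
      rw [show c⁻¹ * ρ = σ by rw [hρdef, hc1]; group]
    · have hdis : Disjoint c ρ := by
        intro z
        by_cases h : σ.SameCycle v z
        · right; rw [hρapp, if_pos h]
        · left; rw [happ, if_neg h]
      have hdis' : Disjoint c⁻¹ ρ := by
        intro z
        rcases hdis z with h | h
        · left; rw [inv_eq_iff_eq]; exact h.symm
        · right; exact h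
      have hσdec : σ = c * ρ := by rw [hρdef]; group
      unfold numCycles
      conv_rhs => rw [hσdec]
      rw [Equiv.Perm.Disjoint.cycleType_mul hdis', Equiv.Perm.Disjoint.cycleType_mul hdis, cycleType_inv]
  · intro z h
    rw [Equiv.Perm.mul_apply, hρapp, if_pos h, hinv, if_pos h]
  · intro z h
    rw [Equiv.Perm.mul_apply, hρapp, if_neg h, hinv,
      if_neg (fun hh => h (sameCycle_apply_right.1 hh))]
  · -- SameCycle transfer
    have hone : ∀ u : V, σ.SameCycle u ((c⁻¹ * ρ) u) := by
      intro u
      by_cases h : σ.SameCycle v u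
      · rw [Equiv.Perm.mul_apply, hρapp, if_pos h, hinv, if_pos h]
        exact ⟨-1, by simp⟩
      · rw [Equiv.Perm.mul_apply, hρapp, if_neg h, hinv,
          if_neg (fun hh => h (sameCycle_apply_right.1 hh))]
        exact ⟨1, by simp⟩
    intro a b hab
    obtain ⟨i, hlt, hi⟩ := hab.exists_pow_eq'
    clear hab hlt
    subst hi
    induction i with
    | zero => simpa using SameCycle.refl σ a
    | succ k ih =>
      rw [pow_succ', Equiv.Perm.mul_apply]
      exact ih.trans (hone _)

private lemma main_lemma {V : Type*} [Fintype V] (G : SimpleGraph V) (σ : Equiv.Perm V)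
    (hσ : IsMinTwoFactor G σ) (x y : V) (hxy : G.Adj x y)
    (hCD : ¬ σ.SameCycle x y) (h2 : G.Adj (σ x) (σ⁻¹ y)) : False := by
  letI : DecidableEq V := Classical.decEq V
  have hfree : ∀ z : V, σ z ≠ z := fun z => (hσ.1 z).1.ne'
  set w := σ⁻¹ y with hwdef
  have hsw : σ w = y := by rw [hwdef, ((Equiv.eq_symm_apply σ).mp rfl : σ (σ⁻¹ y) = y)]
  have step : ∀ u : V, σ.SameCycle u (σ u) := fun u => ⟨1, by simp⟩
  have hyw : σ.SameCycle y w := ⟨-1, by simp [hwdef]⟩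
  have hsep : ∀ a b : V, σ.SameCycle x a → σ.SameCycle y b → a ≠ b := by
    intro a b ha hb he
    exact hCD (ha.trans (he ▸ hb).symm)
  have hnsc : ¬ σ.SameCycle x w := fun h => hCD (h.trans hyw.symm)
  have hxw_ne : x ≠ w := hsep x w (SameCycle.refl σ x) hyw
  set τ := σ * Equiv.swap x w with hτdef
  have hτx : τ x = y := by
    rw [hτdef, Equiv.Perm.mul_apply, Equiv.swap_apply_left, hsw]
  have hτw : τ w = σ x := by
    rw [hτdef, Equiv.Perm.mul_apply, Equiv.swap_apply_right]
  have hτo : ∀ z, z ≠ x → z ≠ w → τ z = σ z := by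
    intro z h1 h2
    rw [hτdef, Equiv.Perm.mul_apply, Equiv.swap_apply_of_ne_of_ne h1 h2]
  have hy_ne_x : y ≠ x := (hsep x y (SameCycle.refl σ x) (SameCycle.refl σ y)).symm
  have hy_ne_w : y ≠ w := by
    intro e
    exact hfree y (by conv_lhs => rw [e, hsw])
  have htf : IsTwoFactor G τ := by
    intro z
    by_cases hz1 : z = x
    · subst hz1
      refine ⟨hτx ▸ hxy, ?_⟩
      rw [hτx, hτo y hy_ne_x hy_ne_w]
      exact (hsep z (σ y) (SameCycle.refl σ z) (step y)).symm
    · by_cases hz2 : z = w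
      · subst hz2
        refine ⟨hτw ▸ h2.symm, ?_⟩
        rw [hτw, hτo (σ x) (hfree x) (hsep (σ x) w (step x) hyw)]
        exact hsep (σ (σ x)) w ((step x).trans (step (σ x))) hyw
      · refine ⟨(hτo z hz1 hz2) ▸ (hσ.1 z).1, ?_⟩
        rw [hτo z hz1 hz2]
        by_cases hsz1 : σ z = x
        · rw [hsz1, hτx]
          have hzx : σ.SameCycle x z := (hsz1 ▸ step z).symm
          exact (hsep z y hzx (SameCycle.refl σ y)).symm
        · by_cases hsz2 : σ z = w
          · rw [hsz2, hτw]
            have hzy : σ.SameCycle y z := hyw.trans (hsz2 ▸ step z).symm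
            exact (hsep (σ x) z (step x) hzy)
          · rw [hτo (σ z) hsz1 hsz2]
            exact (hσ.1 z).2
  exact absurd (hσ.2 τ htf) (not_le.2 (numCycles_merge σ x w (hfree x) (hfree w) hnsc))

end Aux

theorem stmt5 {V : Type*} [Fintype V] (G : SimpleGraph V) (σ : Equiv.Perm V)
    (hσ : IsMinTwoFactor G σ) (x y : V) (hxy : G.Adj x y)
    (hCD : ¬ σ.SameCycle x y) :
    ∀ a b : V, (a = σ x ∨ a = σ⁻¹ x) → (b = σ y ∨ b = σ⁻¹ y) → ¬ G.Adj a b := by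
  rintro a b (rfl | rfl) (rfl | rfl) hab
  · -- a = σ x, b = σ y : reverse the cycle of y
    obtain ⟨σ', htf', hnum', hin, hout, htrans⟩ := reverse_cycle G σ hσ.1 y
    have hmin' : IsMinTwoFactor G σ' := ⟨htf', fun τ ht => hnum' ▸ hσ.2 τ ht⟩
    have hCD' : ¬ σ'.SameCycle x y := fun h => hCD (htrans x y h)
    have h4 : σ' x = σ x := hout x (fun h => hCD h.symm)
    have h6 : σ' (σ y) = y := by
      rw [hin (σ y) ⟨1, by simp⟩]
      exact Equiv.Perm.inv_eq_iff_eq.mpr rfl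
    have h5 : σ'⁻¹ y = σ y := by
      conv_lhs => rw [← h6]
      exact Equiv.Perm.inv_eq_iff_eq.mpr rfl
    exact main_lemma G σ' hmin' x y hxy hCD' (by rw [h4, h5]; exact hab)
  · exact main_lemma G σ hσ x y hxy hCD hab
  · exact main_lemma G σ hσ y x hxy.symm (fun h => hCD h.symm) hab.symm
  · -- a = σ⁻¹ x, b = σ⁻¹ y : reverse the cycle of x
    obtain ⟨σ', htf', hnum', hin, hout, htrans⟩ := reverse_cycle G σ hσ.1 x
    have hmin' : IsMinTwoFactor G σ' := ⟨htf', fun τ ht => hnum' ▸ hσ.2 τ ht⟩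
    have hCD' : ¬ σ'.SameCycle x y := fun h => hCD (htrans x y h)
    have h4 : σ' x = σ⁻¹ x := hin x (Equiv.Perm.SameCycle.refl σ x)
    have h6 : σ' (σ⁻¹ y) = y := by
      rw [hout (σ⁻¹ y) (fun h => hCD (h.trans ⟨1, by simp⟩))]
      exact (Equiv.eq_symm_apply σ).mp rfl
    have h5 : σ'⁻¹ y = σ⁻¹ y := by
      conv_lhs => rw [← h6]
      exact Equiv.Perm.inv_eq_iff_eq.mpr rfl
    exact main_lemma G σ' hmin' x y hxy hCD' (by rw [h4, h5]; exact hab)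
end

section
/- Let G be a 2K_2-free graph with a minimum-component 2-factor F having at least two cycles, and suppose all co-absorbable vertices form an independent set. If a vertex x (on cycle C of F) is of A-type, then both x⁺ and x⁻ are co-absorbable, and x itself is not co-absorbable. -/
open SimpleGraph

section Helpers

open Equiv Equiv.Perm

variable {α : Type*} [Fintype α] [DecidableEq α]

lemma numCycles_eq_card_cycleType (σ : Perm α) :
    numCycles σ = Multiset.card σ.cycleType := by
  unfold numCycles; congr!

/-- Merging two disjoint cycles by a transposition yields a cycle. -/
lemma mergeCycle {c1 c2 : Perm α} (h1 : c1.IsCycle) (h2 : c2.IsCycle)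
    (hd : c1.Disjoint c2) {x y : α} (hx : x ∈ c1.support) (hy : y ∈ c2.support) :
    (c2 * c1 * Equiv.swap x y).IsCycle := by
  set m := c2 * c1 * Equiv.swap x y with hm
  have hd12 : ∀ v ∈ c1.support, c2 v = v := fun v hv => (hd v).resolve_left (mem_support.1 hv)
  have hd21 : ∀ v ∈ c2.support, c1 v = v := fun v hv => ((hd.symm v).resolve_left (mem_support.1 hv))
  have hx2 : x ∉ c2.support := fun h => (mem_support.1 h) (hd12 x hx)
  have hy1 : y ∉ c1.support := fun h => (mem_support.1 h) (hd21 y hy)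
  have hxy : x ≠ y := fun h => hy1 (h ▸ hx)
  have mx : m x = c2 y := by
    simp only [hm, mul_apply, swap_apply_left]
    rw [hd21 y hy]
  have my : m y = c1 x := by
    simp only [hm, mul_apply, swap_apply_right]
    exact hd12 _ (apply_mem_support.2 hx)
  have mb2 : ∀ b ∈ c2.support, b ≠ y → m b = c2 b := by
    intro b hb hby
    have hbx : b ≠ x := fun h => hx2 (h ▸ hb)
    simp only [hm, mul_apply, swap_apply_of_ne_of_ne hbx hby]
    rw [hd21 b hb]
  have mb1 : ∀ b ∈ c1.support, b ≠ x → m b = c1 b := by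
    intro b hb hbx
    have hby : b ≠ y := fun h => hy1 (h ▸ hb)
    simp only [hm, mul_apply, swap_apply_of_ne_of_ne hbx hby]
    exact hd12 _ (apply_mem_support.2 hb)
  have mfix : ∀ b, b ∉ c1.support → b ∉ c2.support → m b = b := by
    intro b hb1 hb2
    have hbx : b ≠ x := fun h => hb1 (h ▸ hx)
    have hby : b ≠ y := fun h => hb2 (h ▸ hy)
    simp only [hm, mul_apply, swap_apply_of_ne_of_ne hbx hby]
    rw [notMem_support.1 hb1, notMem_support.1 hb2]
  have step1 : ∀ b, m.SameCycle x b → m.SameCycle x (m b) :=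
    fun b h => h.trans ⟨1, by simp⟩
  have chain2 : ∀ k : ℕ, m.SameCycle x ((c2 ^ (k+1)) y) := by
    intro k
    induction k with
    | zero => exact ⟨1, by simpa using mx⟩
    | succ k ih =>
      rw [pow_succ', mul_apply]
      by_cases hb : (c2 ^ (k+1)) y = y
      · rw [hb]
        exact ⟨1, by simpa using mx⟩
      · have hbs : (c2 ^ (k+1)) y ∈ c2.support := pow_apply_mem_support.2 hy
        rw [← mb2 _ hbs hb]
        exact step1 _ ih
  have chain2' : ∀ b ∈ c2.support, m.SameCycle x b := by
    intro b hb
    obtain ⟨i, hi0, -, hie⟩ := (h2.sameCycle (mem_support.1 hy) (mem_support.1 hb)).exists_pow_eq c2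
    obtain ⟨j, rfl⟩ := Nat.exists_eq_succ_of_ne_zero hi0.ne'
    exact hie ▸ chain2 j
  have chain1 : ∀ k : ℕ, m.SameCycle x ((c1 ^ (k+1)) x) := by
    intro k
    induction k with
    | zero => simpa [← my] using step1 y (chain2' y hy)
    | succ k ih =>
      rw [pow_succ', mul_apply]
      by_cases hb : (c1 ^ (k+1)) x = x
      · rw [hb]
        simpa [← my] using step1 y (chain2' y hy)
      · have hbs : (c1 ^ (k+1)) x ∈ c1.support := pow_apply_mem_support.2 hx
        rw [← mb1 _ hbs hb]
        exact step1 _ ih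
  have chain1' : ∀ b ∈ c1.support, m.SameCycle x b := by
    intro b hb
    obtain ⟨i, hi0, -, hie⟩ := (h1.sameCycle (mem_support.1 hx) (mem_support.1 hb)).exists_pow_eq c1
    obtain ⟨j, rfl⟩ := Nat.exists_eq_succ_of_ne_zero hi0.ne'
    exact hie ▸ chain1 j
  refine ⟨x, ?_, ?_⟩
  · rw [mx]
    exact fun h => hx2 (h ▸ apply_mem_support.2 hy)
  · intro b hb
    by_cases hb1 : b ∈ c1.support
    · exact chain1' b hb1
    by_cases hb2 : b ∈ c2.support
    · exact chain2' b hb2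
    · exact absurd (mfix b hb1 hb2) hb

/-- Merging two disjoint cycles while deleting the successor of `x` yields a cycle. -/
lemma absorbCycle {c1 c2 : Perm α} (h1 : c1.IsCycle) (h2 : c2.IsCycle)
    (hd : c1.Disjoint c2) {x y : α} (hx : x ∈ c1.support) (hy : y ∈ c2.support) :
    (c2 * c1 * (Equiv.swap x (c1 x) * Equiv.swap x y)).IsCycle := by
  set u := c1 x with hu
  set m := c2 * c1 * (Equiv.swap x u * Equiv.swap x y) with hm
  have hd12 : ∀ v ∈ c1.support, c2 v = v := fun v hv => (hd v).resolve_left (mem_support.1 hv)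
  have hd21 : ∀ v ∈ c2.support, c1 v = v := fun v hv => ((hd.symm v).resolve_left (mem_support.1 hv))
  have hx2 : x ∉ c2.support := fun h => (mem_support.1 h) (hd12 x hx)
  have hy1 : y ∉ c1.support := fun h => (mem_support.1 h) (hd21 y hy)
  have hxy : x ≠ y := fun h => hy1 (h ▸ hx)
  have hux : u ≠ x := mem_support.1 hx
  have hus : u ∈ c1.support := apply_mem_support.2 hx
  have huy : u ≠ y := fun h => hy1 (h ▸ hus)
  have mx : m x = c2 y := by
    simp only [hm, mul_apply, swap_apply_left,
      swap_apply_of_ne_of_ne hxy.symm (Ne.symm huy)]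
    rw [hd21 y hy]
  have my : m y = c1 u := by
    simp only [hm, mul_apply, swap_apply_right, swap_apply_left]
    exact hd12 _ (apply_mem_support.2 hus)
  have mu : m u = u := by
    simp only [hm, mul_apply, swap_apply_of_ne_of_ne hux huy, swap_apply_right, ← hu]
    exact hd12 _ hus
  have mb2 : ∀ b ∈ c2.support, b ≠ y → m b = c2 b := by
    intro b hb hby
    have hbx : b ≠ x := fun h => hx2 (h ▸ hb)
    have hbu : b ≠ u := fun h => (fun h2 => (mem_support.1 h2) (hd12 u hus)) (h ▸ hb)
    simp only [hm, mul_apply, swap_apply_of_ne_of_ne hbx hby, swap_apply_of_ne_of_ne hbx hbu]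
    rw [hd21 b hb]
  have mb1 : ∀ b ∈ c1.support, b ≠ x → b ≠ u → m b = c1 b := by
    intro b hb hbx hbu
    have hby : b ≠ y := fun h => hy1 (h ▸ hb)
    simp only [hm, mul_apply, swap_apply_of_ne_of_ne hbx hby, swap_apply_of_ne_of_ne hbx hbu]
    exact hd12 _ (apply_mem_support.2 hb)
  have mfix : ∀ b, b ∉ c1.support → b ∉ c2.support → m b = b := by
    intro b hb1 hb2
    have hbx : b ≠ x := fun h => hb1 (h ▸ hx)
    have hby : b ≠ y := fun h => hb2 (h ▸ hy)
    have hbu : b ≠ u := fun h => hb1 (h ▸ hus)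
    simp only [hm, mul_apply, swap_apply_of_ne_of_ne hbx hby, swap_apply_of_ne_of_ne hbx hbu]
    rw [notMem_support.1 hb1, notMem_support.1 hb2]
  have step1 : ∀ b, m.SameCycle x b → m.SameCycle x (m b) :=
    fun b h => h.trans ⟨1, by simp⟩
  have chain2 : ∀ k : ℕ, m.SameCycle x ((c2 ^ (k+1)) y) := by
    intro k
    induction k with
    | zero => exact ⟨1, by simpa using mx⟩
    | succ k ih =>
      rw [pow_succ', mul_apply]
      by_cases hb : (c2 ^ (k+1)) y = y
      · rw [hb]; exact ⟨1, by simpa using mx⟩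
      · rw [← mb2 _ (pow_apply_mem_support.2 hy) hb]
        exact step1 _ ih
  have chain2' : ∀ b ∈ c2.support, m.SameCycle x b := by
    intro b hb
    obtain ⟨i, hi0, -, hie⟩ := (h2.sameCycle (mem_support.1 hy) (mem_support.1 hb)).exists_pow_eq c2
    obtain ⟨j, rfl⟩ := Nat.exists_eq_succ_of_ne_zero hi0.ne'
    exact hie ▸ chain2 j
  -- the entry point into c1's cycle: m y = c1 u = c1^2 x
  have base : m.SameCycle x (c1 (c1 x)) := by
    rw [← hu, ← my]; exact step1 y (chain2' y hy)
  have chainB : ∀ k : ℕ, m.SameCycle x ((c1 ^ (k+2)) x) ∨ (c1 ^ (k+2)) x = u := by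
    intro k
    induction k with
    | zero => exact Or.inl (by simpa [pow_succ, mul_apply] using base)
    | succ k ih =>
      rw [pow_succ', mul_apply]
      rcases ih with ih | ih
      · by_cases hbx : (c1 ^ (k+2)) x = x
        · rw [hbx]; exact Or.inr rfl
        by_cases hbu : (c1 ^ (k+2)) x = u
        · rw [hbu, hu]; exact Or.inl base
        · rw [← mb1 _ (pow_apply_mem_support.2 hx) hbx hbu]
          exact Or.inl (step1 _ ih)
      · rw [ih, hu]; exact Or.inl base
  have chain1' : ∀ b ∈ c1.support, b ≠ u → m.SameCycle x b := by
    intro b hb hbu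
    obtain ⟨i, hi0, -, hie⟩ := (h1.sameCycle (mem_support.1 hx) (mem_support.1 hb)).exists_pow_eq c1
    obtain ⟨j, rfl⟩ := Nat.exists_eq_succ_of_ne_zero hi0.ne'
    rcases j with - | j
    · exact absurd (by simpa [hu] using hie.symm) hbu
    · rcases chainB j with h | h
      · exact hie ▸ h
      · rw [hie] at h; exact absurd h hbu
  refine ⟨x, ?_, ?_⟩
  · rw [mx]
    exact fun h => hx2 (h ▸ apply_mem_support.2 hy)
  · intro b hb
    by_cases hb1 : b ∈ c1.support
    · by_cases hbu : b = u
      · rw [hbu] at hb; exact absurd mu hb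
      · exact chain1' b hb1 hbu
    by_cases hb2 : b ∈ c2.support
    · exact chain2' b hb2
    · exact absurd (mfix b hb1 hb2) hb

lemma decompTwo (σ : Perm α) {x y : α} (hx : σ x ≠ x) (hy : σ y ≠ y)
    (hns : ¬σ.SameCycle x y) :
    σ = (σ * (σ.cycleOf x)⁻¹ * (σ.cycleOf y)⁻¹) * (σ.cycleOf y * σ.cycleOf x) ∧
    (σ * (σ.cycleOf x)⁻¹ * (σ.cycleOf y)⁻¹).Disjoint (σ.cycleOf x) ∧
    (σ * (σ.cycleOf x)⁻¹ * (σ.cycleOf y)⁻¹).Disjoint (σ.cycleOf y) ∧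
    (σ.cycleOf x).Disjoint (σ.cycleOf y) ∧
    Multiset.card (σ * (σ.cycleOf x)⁻¹ * (σ.cycleOf y)⁻¹).cycleType + 2 =
      Multiset.card σ.cycleType := by
  set c1 := σ.cycleOf x with hc1
  set c2 := σ.cycleOf y with hc2
  set ρ := σ * c1⁻¹ * c2⁻¹ with hρ
  have hxs : x ∈ σ.support := mem_support.2 hx
  have hys : y ∈ σ.support := mem_support.2 hy
  have hm1 : c1 ∈ σ.cycleFactorsFinset := cycleOf_mem_cycleFactorsFinset_iff.2 hxs
  have hm2 : c2 ∈ σ.cycleFactorsFinset := cycleOf_mem_cycleFactorsFinset_iff.2 hys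
  have hne : c2 ≠ c1 := by
    intro h
    apply hns
    have : y ∈ c1.support := by
      rw [← h, hc2]
      exact mem_support_cycleOf_iff.2 ⟨SameCycle.refl _ _, hys⟩
    exact (mem_support_cycleOf_iff.1 this).1
  have d1 : (σ * c1⁻¹).Disjoint c1 := disjoint_mul_inv_of_mem_cycleFactorsFinset hm1
  have hm2' : c2 ∈ (σ * c1⁻¹).cycleFactorsFinset := by
    rw [cycleFactorsFinset_mul_inv_mem_eq_sdiff hm1, Finset.mem_sdiff]
    exact ⟨hm2, by simp [hne]⟩
  have d2 : ρ.Disjoint c2 := disjoint_mul_inv_of_mem_cycleFactorsFinset hm2'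
  have d3 : ρ.Disjoint c1 := by
    intro v
    rcases d1 v with h | h
    · rcases d2 v with h' | h'
      · exact Or.inl h'
      · refine Or.inl ?_
        have hv : c2⁻¹ v = v := Perm.inv_eq_iff_eq.2 h'.symm
        rw [hρ, mul_apply, hv, h]
    · exact Or.inr h
  have d23 : c2.Disjoint c1 := cycleFactorsFinset_pairwise_disjoint σ hm2 hm1 hne
  have heq : σ = ρ * (c2 * c1) := by
    rw [hρ]; group
  have hcyc1 : c1.IsCycle := isCycle_cycleOf σ hx
  have hcyc2 : c2.IsCycle := isCycle_cycleOf σ hy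
  refine ⟨by rw [← heq], d3, d2, d23.symm, ?_⟩
  have : σ.cycleType = ρ.cycleType + (c2.cycleType + c1.cycleType) := by
    rw [heq, Perm.Disjoint.cycleType_mul (d2.mul_right d3), Perm.Disjoint.cycleType_mul d23]
  rw [this]
  simp [hcyc1.cycleType, hcyc2.cycleType]

/-- The permutation obtained from `σ` by reversing the cycle through `y`. -/
noncomputable def revCycle {β : Type*} [Fintype β] [DecidableEq β] (σ : Perm β) (y : β) : Perm β :=
  σ * (σ.cycleOf y)⁻¹ * (σ.cycleOf y)⁻¹

lemma revCycle_apply_of_not {σ : Perm α} {y v : α} (h : ¬σ.SameCycle y v) :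
    revCycle σ y v = σ v := by
  have hc : σ.cycleOf y v = v := cycleOf_apply_of_not_sameCycle h
  have hc' : (σ.cycleOf y)⁻¹ v = v := Perm.inv_eq_iff_eq.2 hc.symm
  simp [revCycle, mul_apply, hc']

lemma revCycle_apply_of {σ : Perm α} {y v : α} (h : σ.SameCycle y v) :
    revCycle σ y v = σ⁻¹ v := by
  have h1 : σ.SameCycle y (σ⁻¹ v) := h.trans ⟨-1, by simp⟩
  have hc : (σ.cycleOf y)⁻¹ v = σ⁻¹ v := by
    refine Perm.inv_eq_iff_eq.2 ?_
    rw [h1.cycleOf_apply]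
    simp
  have h2 : σ.SameCycle y (σ⁻¹ (σ⁻¹ v)) := h1.trans ⟨-1, by simp⟩
  have hc2 : (σ.cycleOf y)⁻¹ (σ⁻¹ v) = σ⁻¹ (σ⁻¹ v) := by
    refine Perm.inv_eq_iff_eq.2 ?_
    rw [h2.cycleOf_apply]
    simp
  simp only [revCycle, mul_apply, hc, hc2]; simp

lemma revCycle_or (σ : Perm α) (y : α) (v : α) :
    revCycle σ y v = σ v ∨ revCycle σ y v = σ⁻¹ v := by
  by_cases h : σ.SameCycle y v
  · exact Or.inr (revCycle_apply_of h)
  · exact Or.inl (revCycle_apply_of_not h)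

lemma sameCycle_of_or {σ τ : Perm α} (h : ∀ v, τ v = σ v ∨ τ v = σ⁻¹ v) {a b : α} :
    τ.SameCycle a b → σ.SameCycle a b := by
  rintro ⟨i, rfl⟩
  suffices H : ∀ i : ℤ, σ.SameCycle a ((τ ^ i) a) from H i
  intro i
  induction i using Int.induction_on with
  | zero => exact SameCycle.refl _ _
  | succ i ih =>
    have : (τ ^ ((i : ℤ) + 1)) a = τ ((τ ^ (i : ℤ)) a) := by
      rw [add_comm, zpow_add, zpow_one, mul_apply]
    rw [this]
    rcases h ((τ ^ (i : ℤ)) a) with h' | h' <;> rw [h']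
    · exact ih.trans ⟨1, by simp⟩
    · exact ih.trans ⟨-1, by simp⟩
  | pred i ih =>
    have : (τ ^ (-(i : ℤ) - 1)) a = τ⁻¹ ((τ ^ (-(i : ℤ))) a) := by
      rw [sub_eq_add_neg, add_comm, zpow_add, zpow_neg_one, mul_apply]
    rw [this]
    set w := (τ ^ (-(i : ℤ))) a
    rcases h (τ⁻¹ w) with h' | h'
    · have h2 : σ (τ⁻¹ w) = w := by rw [← h']; simp
      have h3 : τ⁻¹ w = σ⁻¹ w := by rw [Perm.eq_inv_iff_eq]; exact h2
      rw [h3]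
      exact ih.trans ⟨-1, by simp⟩
    · have h2 : σ⁻¹ (τ⁻¹ w) = w := by rw [← h']; simp
      have h3 : τ⁻¹ w = σ w := by apply σ⁻¹.injective; simpa using h2
      rw [h3]
      exact ih.trans ⟨1, by simp⟩

lemma cycleType_card_revCycle (σ : Perm α) {y : α} (hy : σ y ≠ y) :
    Multiset.card (revCycle σ y).cycleType = Multiset.card σ.cycleType := by
  set c := σ.cycleOf y with hc
  have hm : c ∈ σ.cycleFactorsFinset := cycleOf_mem_cycleFactorsFinset_iff.2 (mem_support.2 hy)
  have d1 : (σ * c⁻¹).Disjoint c := disjoint_mul_inv_of_mem_cycleFactorsFinset hm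
  have d1' : (σ * c⁻¹).Disjoint c⁻¹ := by
    intro v
    rcases d1 v with h | h
    · exact Or.inl h
    · exact Or.inr (Perm.inv_eq_iff_eq.2 h.symm)
  have h1 : σ = (σ * c⁻¹) * c := by group
  have h2 : (revCycle σ y) = (σ * c⁻¹) * c⁻¹ := by rw [revCycle]
  have h3 := Perm.Disjoint.cycleType_mul d1
  rw [← h1] at h3
  rw [h2, Perm.Disjoint.cycleType_mul d1', h3]
  simp [cycleType_inv]

lemma mergeTwoFactor {G : SimpleGraph α} {σ : Perm α} (hσ : IsTwoFactor G σ) {x y : α}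
    (hns : ¬σ.SameCycle x y) (e1 : G.Adj x (σ y)) (e2 : G.Adj y (σ x)) :
    IsTwoFactor G (σ * Equiv.swap x y) ∧
    numCycles (σ * Equiv.swap x y) + 1 = numCycles σ := by
  have hfix : ∀ v, σ v ≠ v := fun v h => (hσ v).2 (by rw [h, h])
  have zp2 : ∀ v, (σ ^ (2:ℤ)) v = σ (σ v) := fun v => by
    rw [show (2:ℤ) = 1+1 by norm_num, zpow_add, zpow_one, mul_apply]
  have hNS1 : ∀ i : ℤ, (σ ^ i) x ≠ y := fun i h => hns ⟨i, h⟩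
  have hNS2 : ∀ i : ℤ, (σ ^ i) y ≠ x := fun i h => hns (SameCycle.symm ⟨i, h⟩)
  have hxy : x ≠ y := by have := hNS1 0; simpa using this
  have hsy_x : σ y ≠ x := by have := hNS2 1; simpa using this
  have hsx_y : σ x ≠ y := by have := hNS1 1; simpa using this
  have h2y : σ (σ y) ≠ x := by have := hNS2 2; rwa [zp2] at this
  have h2x : σ (σ x) ≠ y := by have := hNS1 2; rwa [zp2] at this
  set τ := σ * Equiv.swap x y with hτ
  have tx : τ x = σ y := by simp [hτ, mul_apply]
  have ty : τ y = σ x := by simp [hτ, mul_apply]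
  have tv : ∀ v, v ≠ x → v ≠ y → τ v = σ v := fun v h1 h2 => by
    simp [hτ, mul_apply, swap_apply_of_ne_of_ne h1 h2]
  constructor
  · intro v
    by_cases hvx : v = x
    · subst hvx
      refine ⟨tx ▸ e1, ?_⟩
      rw [tx, tv (σ y) hsy_x (hfix y)]
      exact h2y
    by_cases hvy : v = y
    · subst hvy
      refine ⟨ty ▸ e2, ?_⟩
      rw [ty, tv (σ x) (hfix x) hsx_y]
      exact h2x
    · rw [tv v hvx hvy]
      refine ⟨(hσ v).1, ?_⟩
      by_cases h1 : σ v = x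
      · rw [h1, tx]
        intro h
        exact h2y (by rw [h, h1])
      by_cases h2 : σ v = y
      · rw [h2, ty]
        intro h
        exact h2x (by rw [h, h2])
      · rw [tv (σ v) h1 h2]
        exact (hσ v).2
  · obtain ⟨heq, d3, d2, d12, hcard⟩ := decompTwo σ (hfix x) (hfix y) hns
    set c1 := σ.cycleOf x with hc1
    set c2 := σ.cycleOf y with hc2
    set ρ := σ * c1⁻¹ * c2⁻¹ with hρ
    have hxs : x ∈ c1.support :=
      mem_support_cycleOf_iff.2 ⟨SameCycle.refl _ _, mem_support.2 (hfix x)⟩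
    have hys : y ∈ c2.support :=
      mem_support_cycleOf_iff.2 ⟨SameCycle.refl _ _, mem_support.2 (hfix y)⟩
    have hmc : (c2 * c1 * Equiv.swap x y).IsCycle :=
      mergeCycle (isCycle_cycleOf σ (hfix x)) (isCycle_cycleOf σ (hfix y)) d12 hxs hys
    have heqτ : τ = ρ * (c2 * c1 * Equiv.swap x y) := by
      rw [hτ]
      conv_lhs => rw [heq]
      rw [mul_assoc]
    have dρm : ρ.Disjoint (c2 * c1 * Equiv.swap x y) := by
      intro v
      by_cases hρv : ρ v = v
      · exact Or.inl hρv
      have f1 : c1 v = v := (d3 v).resolve_left hρv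
      have f2 : c2 v = v := (d2 v).resolve_left hρv
      have hvx : v ≠ x := fun h => (mem_support.1 (h ▸ hxs)) (h ▸ f1)
      have hvy : v ≠ y := fun h => (mem_support.1 (h ▸ hys)) (h ▸ f2)
      refine Or.inr ?_
      simp [mul_apply, swap_apply_of_ne_of_ne hvx hvy, f1, f2]
    rw [numCycles_eq_card_cycleType, numCycles_eq_card_cycleType, heqτ, Perm.Disjoint.cycleType_mul dρm]
    simp only [Multiset.card_add, card_cycleType_eq_one.2 hmc]
    omega

lemma absorbTwoFactor {G : SimpleGraph α} {σ : Perm α} (hσ : IsTwoFactor G σ) {x y : α}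
    (hns : ¬σ.SameCycle x y) (e1 : G.Adj x (σ y)) (e2 : G.Adj y (σ (σ x))) :
    IsTwoFactorAvoiding G (σ x) (σ * (Equiv.swap x (σ x) * Equiv.swap x y)) ∧
    numCycles (σ * (Equiv.swap x (σ x) * Equiv.swap x y)) + 1 = numCycles σ := by
  have hfix : ∀ v, σ v ≠ v := fun v h => (hσ v).2 (by rw [h, h])
  have zp2 : ∀ v, (σ ^ (2:ℤ)) v = σ (σ v) := fun v => by
    rw [show (2:ℤ) = 1+1 by norm_num, zpow_add, zpow_one, mul_apply]
  have zp3 : ∀ v, (σ ^ (3:ℤ)) v = σ (σ (σ v)) := fun v => by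
    rw [show (3:ℤ) = 1+1+1 by norm_num, zpow_add, zpow_add, zpow_one, mul_apply, mul_apply]
  have hNS1 : ∀ i : ℤ, (σ ^ i) x ≠ y := fun i h => hns ⟨i, h⟩
  have hNS2 : ∀ i : ℤ, (σ ^ i) y ≠ x := fun i h => hns (SameCycle.symm ⟨i, h⟩)
  have hxy : x ≠ y := by have := hNS1 0; simpa using this
  have hsy_x : σ y ≠ x := by have := hNS2 1; simpa using this
  have hsx_y : σ x ≠ y := by have := hNS1 1; simpa using this
  have h2y : σ (σ y) ≠ x := by have := hNS2 2; rwa [zp2] at this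
  have h2x : σ (σ x) ≠ y := by have := hNS1 2; rwa [zp2] at this
  have h3x : σ (σ (σ x)) ≠ y := by have := hNS1 3; rwa [zp3] at this
  set τ := σ * (Equiv.swap x (σ x) * Equiv.swap x y) with hτ
  have tx : τ x = σ y := by
    simp only [hτ, mul_apply, swap_apply_left,
      swap_apply_of_ne_of_ne hxy.symm (Ne.symm hsx_y)]
  have ty : τ y = σ (σ x) := by
    simp only [hτ, mul_apply, swap_apply_right, swap_apply_left]
  have tsx : τ (σ x) = σ x := by
    simp only [hτ, mul_apply, swap_apply_of_ne_of_ne (hfix x) hsx_y, swap_apply_right]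
  have tv : ∀ v, v ≠ x → v ≠ y → v ≠ σ x → τ v = σ v := fun v h1 h2 h3 => by
    simp only [hτ, mul_apply, swap_apply_of_ne_of_ne h1 h2, swap_apply_of_ne_of_ne h1 h3]
  constructor
  · refine ⟨tsx, ?_⟩
    intro v hv
    by_cases hvx : v = x
    · rw [hvx]
      refine ⟨tx ▸ e1, ?_⟩
      have hsy_sx : σ y ≠ σ x := fun h => hxy.symm (σ.injective h)
      rw [tx, tv (σ y) hsy_x (hfix y) hsy_sx]
      exact h2y
    by_cases hvy : v = y
    · rw [hvy]
      refine ⟨ty ▸ e2, ?_⟩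
      have a1 : σ (σ x) ≠ x := (hσ x).2
      have a3 : σ (σ x) ≠ σ x := fun h => hfix x (σ.injective h)
      rw [ty, tv (σ (σ x)) a1 h2x a3]
      exact h3x
    · rw [tv v hvx hvy hv]
      refine ⟨(hσ v).1, ?_⟩
      by_cases h1 : σ v = x
      · rw [h1, tx]
        intro h
        exact h2y (by rw [h, h1])
      by_cases h2 : σ v = y
      · rw [h2, ty]
        intro h
        exact h3x (by rw [h, h2])
      · have h3 : σ v ≠ σ x := fun h => hvx (σ.injective h)
        rw [tv (σ v) h1 h2 h3]
        exact (hσ v).2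
  · obtain ⟨heq, d3, d2, d12, hcard⟩ := decompTwo σ (hfix x) (hfix y) hns
    set c1 := σ.cycleOf x with hc1
    set c2 := σ.cycleOf y with hc2
    set ρ := σ * c1⁻¹ * c2⁻¹ with hρ
    have hxs : x ∈ c1.support :=
      mem_support_cycleOf_iff.2 ⟨SameCycle.refl _ _, mem_support.2 (hfix x)⟩
    have hys : y ∈ c2.support :=
      mem_support_cycleOf_iff.2 ⟨SameCycle.refl _ _, mem_support.2 (hfix y)⟩
    have hc1x : c1 x = σ x := cycleOf_apply_self σ x
    have hsxs : σ x ∈ c1.support :=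
      mem_support_cycleOf_iff.2 ⟨sameCycle_apply_right.2 (SameCycle.refl _ _),
        mem_support.2 (hfix x)⟩
    have hmc : (c2 * c1 * (Equiv.swap x (σ x) * Equiv.swap x y)).IsCycle := by
      have := absorbCycle (isCycle_cycleOf σ (hfix x)) (isCycle_cycleOf σ (hfix y)) d12 hxs hys
      rwa [hc1x] at this
    have heqτ : τ = ρ * (c2 * c1 * (Equiv.swap x (σ x) * Equiv.swap x y)) := by
      rw [hτ]
      calc σ * (Equiv.swap x (σ x) * Equiv.swap x y)
          = (ρ * (c2 * c1)) * (Equiv.swap x (σ x) * Equiv.swap x y) := by rw [← heq]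
        _ = _ := by rw [mul_assoc]
    have dρm : ρ.Disjoint (c2 * c1 * (Equiv.swap x (σ x) * Equiv.swap x y)) := by
      intro v
      by_cases hρv : ρ v = v
      · exact Or.inl hρv
      have f1 : c1 v = v := (d3 v).resolve_left hρv
      have f2 : c2 v = v := (d2 v).resolve_left hρv
      have hvx : v ≠ x := fun h => (mem_support.1 (h ▸ hxs)) (h ▸ f1)
      have hvy : v ≠ y := fun h => (mem_support.1 (h ▸ hys)) (h ▸ f2)
      have hvsx : v ≠ σ x := fun h => (mem_support.1 (h ▸ hsxs)) (h ▸ f1)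
      refine Or.inr ?_
      simp [mul_apply, swap_apply_of_ne_of_ne hvx hvy, swap_apply_of_ne_of_ne hvx hvsx, f1, f2]
    rw [numCycles_eq_card_cycleType, numCycles_eq_card_cycleType, heqτ, Perm.Disjoint.cycleType_mul dρm]
    simp only [Multiset.card_add, card_cycleType_eq_one.2 hmc]
    omega


lemma isTwoFactor_revCycle {G : SimpleGraph α} {σ : Perm α} (hσ : IsTwoFactor G σ) (y : α) :
    IsTwoFactor G (revCycle σ y) := by
  intro v
  by_cases h : σ.SameCycle y v
  · rw [revCycle_apply_of h]
    constructor
    · have := (hσ (σ⁻¹ v)).1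
      rw [show σ (σ⁻¹ v) = v from σ.apply_symm_apply v] at this
      exact this.symm
    · rw [revCycle_apply_of (h.trans ⟨-1, by simp⟩)]
      intro hcon
      apply (hσ v).2
      have := congrArg (fun w => σ (σ w)) hcon
      simpa using this.symm
  · rw [revCycle_apply_of_not h]
    refine ⟨(hσ v).1, ?_⟩
    have h2 : ¬ σ.SameCycle y (σ v) := fun hh => h (sameCycle_apply_right.1 hh)
    rw [revCycle_apply_of_not h2]
    exact (hσ v).2

lemma numCycles_revCycle (σ : Perm α) {y : α} (hy : σ y ≠ y) :
    numCycles (revCycle σ y) = numCycles σ := by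
  rw [numCycles_eq_card_cycleType, numCycles_eq_card_cycleType]
  exact cycleType_card_revCycle σ hy

lemma sameCycle_revCycle {σ : Perm α} {y a b : α} :
    (revCycle σ y).SameCycle a b → σ.SameCycle a b :=
  sameCycle_of_or (revCycle_or σ y)

/-- The key lemma: an A-type vertex has a co-absorbable successor. -/
lemma key_coabsorb {G : SimpleGraph α} (h2 : TwoK2Free G) {σ : Perm α}
    (hσ : IsMinTwoFactor G σ) {x : α} (hx : AType G σ x) :
    CoAbsorbable G σ (σ x) := by
  obtain ⟨z, hnsz, e1, e2⟩ := hx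
  have hTF := hσ.1
  have hfix : ∀ v, σ v ≠ v := fun v h => (hTF v).2 (by rw [h, h])
  have hns1 : ∀ i : ℤ, (σ ^ i) x ≠ z := fun i h => hnsz ⟨i, h⟩
  have hzx : ¬ σ.SameCycle z x := fun h => hnsz h.symm
  have hzsx : ¬ σ.SameCycle z (σ x) := fun h => hnsz (sameCycle_apply_right.1 h).symm
  have d1 : σ x ≠ z := by have := hns1 1; simpa using this
  have d2 : σ x ≠ σ z := fun h => hnsz (by rw [σ.injective h])
  have d3 : σ (σ x) ≠ z := by
    have := hns1 2
    rwa [show (σ ^ (2:ℤ)) x = σ (σ x) by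
      rw [show (2:ℤ) = 1+1 by norm_num, zpow_add, zpow_one, mul_apply]] at this
  have d4 : σ (σ x) ≠ σ z := fun h => d1 (σ.injective h)
  by_cases A1 : G.Adj (σ x) z
  · obtain ⟨ht, hc⟩ := mergeTwoFactor hTF hnsz e2 A1.symm
    exact absurd (hσ.2 _ ht) (by omega)
  by_cases A2 : G.Adj (σ x) (σ z)
  · have hTF' := isTwoFactor_revCycle hTF z
    have hns' : ¬ (revCycle σ z).SameCycle x (σ z) := fun h =>
      hnsz ((sameCycle_revCycle h).trans (sameCycle_apply_right.2 (SameCycle.refl _ _)).symm)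
    have hxz : revCycle σ z (σ z) = z := by
      rw [revCycle_apply_of (sameCycle_apply_right.2 (SameCycle.refl _ _))]
      simp
    have hsx : revCycle σ z x = σ x := revCycle_apply_of_not hzx
    obtain ⟨ht, hc⟩ := mergeTwoFactor hTF' hns' (by rwa [hxz]) (by rw [hsx]; exact A2.symm)
    rw [numCycles_revCycle σ (hfix z)] at hc
    exact absurd (hσ.2 _ ht) (by omega)
  by_cases A3 : G.Adj (σ (σ x)) z
  · obtain ⟨ht, hc⟩ := absorbTwoFactor hTF hnsz e2 A3.symm
    exact ⟨_, ht, by omega⟩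
  by_cases A4 : G.Adj (σ (σ x)) (σ z)
  · have hTF' := isTwoFactor_revCycle hTF z
    have hns' : ¬ (revCycle σ z).SameCycle x (σ z) := fun h =>
      hnsz ((sameCycle_revCycle h).trans (sameCycle_apply_right.2 (SameCycle.refl _ _)).symm)
    have hxz : revCycle σ z (σ z) = z := by
      rw [revCycle_apply_of (sameCycle_apply_right.2 (SameCycle.refl _ _))]
      simp
    have hsx : revCycle σ z x = σ x := revCycle_apply_of_not hzx
    have hssx : revCycle σ z (revCycle σ z x) = σ (σ x) := by
      rw [hsx, revCycle_apply_of_not hzsx]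
    obtain ⟨ht, hc⟩ := absorbTwoFactor hTF' hns' (by rwa [hxz])
      (by rw [hssx]; exact A4.symm)
    rw [numCycles_revCycle σ (hfix z)] at hc
    rw [hsx] at ht hc
    exact ⟨_, ht, by omega⟩
  · exact absurd ⟨σ x, σ (σ x), z, σ z, (hTF (σ x)).1, (hTF z).1,
      d1, d2, d3, d4, A1, A2, A3, A4⟩ h2

end Helpers

theorem stmt8 {V : Type*} [Fintype V] (G : SimpleGraph V) (h2 : TwoK2Free G)
    (σ : Equiv.Perm V) (hσ : IsMinTwoFactor G σ) (hcyc : 1 < numCycles σ)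
    (hind : _root_.IsIndepSet G {z : V | CoAbsorbable G σ z})
    (x : V) (hx : AType G σ x) :
    CoAbsorbable G σ (σ x) ∧ CoAbsorbable G σ (σ⁻¹ x) ∧ ¬ CoAbsorbable G σ x := by
  letI := Classical.decEq V
  obtain ⟨z, hnsz, ez1, ez2⟩ := hx
  have hfix : ∀ v, σ v ≠ v := fun v h => (hσ.1 v).2 (by rw [h, h])
  have part1 : CoAbsorbable G σ (σ x) := key_coabsorb h2 hσ ⟨z, hnsz, ez1, ez2⟩
  have hnum := numCycles_revCycle σ (hfix x)
  have hσ₂ : IsMinTwoFactor G (revCycle σ x) :=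
    ⟨isTwoFactor_revCycle hσ.1 x, fun τ ht => by rw [hnum]; exact hσ.2 τ ht⟩
  have hx₂ : AType G (revCycle σ x) x :=
    ⟨z, fun h => hnsz (sameCycle_revCycle h), ez1, by
      rw [revCycle_apply_of_not hnsz]; exact ez2⟩
  have part2' := key_coabsorb h2 hσ₂ hx₂
  rw [revCycle_apply_of (Equiv.Perm.SameCycle.refl _ _)] at part2'
  have part2 : CoAbsorbable G σ (σ⁻¹ x) := by
    obtain ⟨τ, ht, hc⟩ := part2'
    rw [hnum] at hc
    exact ⟨τ, ht, hc⟩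
  refine ⟨part1, part2, ?_⟩
  intro hco
  exact hind x hco (σ x) part1 (hσ.1 x).1
end

section
/- Let G be a 2K_2-free graph with a minimum-component 2-factor F having at least two cycles. Let C be a cycle of F and xy an edge of C such that both x and y are of B-type. Then every other cycle D of F alternates between vertices adjacent to {x,y} and vertices not adjacent to {x,y}; that is, for every edge uv of D, exactly one of u, v has a neighbor in {x, y}. -/
open SimpleGraph

/-! ### Auxiliary machinery: counting cycles via same-cycle classes -/

section Aux

set_option linter.unusedSectionVars false

open scoped Classical

variable {V : Type*} [Fintype V]

/-- The same-cycle relation of a permutation, as a setoid. -/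
def scSetoid (σ : Equiv.Perm V) : Setoid V :=
  ⟨σ.SameCycle, ⟨Equiv.Perm.SameCycle.refl σ, fun h => h.symm, fun h h' => h.trans h'⟩⟩

lemma numCycles_eq_card_quot (σ : Equiv.Perm V) (hfpf : ∀ w, σ w ≠ w) :
    numCycles σ = Nat.card (Quotient (scSetoid σ)) := by
  letI := Classical.decEq V
  have h1 : numCycles σ = σ.cycleFactorsFinset.card := by
    unfold numCycles
    rw [Equiv.Perm.cycleType_def, Multiset.card_map]
    rfl
  rw [h1]
  have hsupp : ∀ a : V, a ∈ σ.support := fun a => Equiv.Perm.mem_support.mpr (hfpf a)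
  let φ : Quotient (scSetoid σ) → {c // c ∈ σ.cycleFactorsFinset} :=
    Quotient.lift
      (fun a => (⟨σ.cycleOf a,
        Equiv.Perm.cycleOf_mem_cycleFactorsFinset_iff.mpr (hsupp a)⟩ :
          {c // c ∈ σ.cycleFactorsFinset}))
      (fun a b h => Subtype.ext (Equiv.Perm.SameCycle.cycleOf_eq h))
  have hbij : Function.Bijective φ := by
    constructor
    · intro q1 q2
      induction q1 using Quotient.ind with
      | _ a =>
        induction q2 using Quotient.ind with
        | _ b =>
          intro h
          have he : σ.cycleOf a = σ.cycleOf b := congrArg Subtype.val h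
          have hb : b ∈ (σ.cycleOf b).support :=
            Equiv.Perm.mem_support_cycleOf_iff.mpr
              ⟨Equiv.Perm.SameCycle.refl σ b, hsupp b⟩
          rw [← he] at hb
          exact Quotient.sound (Equiv.Perm.mem_support_cycleOf_iff.mp hb).1
    · rintro ⟨c, hc⟩
      have hcyc : c.IsCycle := (Equiv.Perm.mem_cycleFactorsFinset_iff.mp hc).1
      obtain ⟨a, ha, -⟩ := hcyc
      have ha' : a ∈ c.support := Equiv.Perm.mem_support.mpr ha
      exact ⟨Quotient.mk (scSetoid σ) a,
        Subtype.ext (Equiv.Perm.cycle_is_cycleOf ha' hc).symm⟩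
  calc σ.cycleFactorsFinset.card
      = Nat.card {c // c ∈ σ.cycleFactorsFinset} := (Nat.card_eq_finsetCard _).symm
    _ = Nat.card (Quotient (scSetoid σ)) := (Nat.card_eq_of_bijective φ hbij).symm

lemma sc_mono {σ τ : Equiv.Perm V} (h1 : ∀ a, τ.SameCycle a (σ a)) :
    ∀ a b, σ.SameCycle a b → τ.SameCycle a b := by
  have hn : ∀ (n : ℕ) (a : V), τ.SameCycle a ((σ ^ n) a) := by
    intro n
    induction n with
    | zero => intro a; simpa using Equiv.Perm.SameCycle.refl τ a
    | succ n ih =>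
      intro a
      have h2 : (σ ^ (n + 1)) a = (σ ^ n) (σ a) := by
        rw [pow_succ, Equiv.Perm.mul_apply]
      rw [h2]
      exact (h1 a).trans (ih (σ a))
  rintro a b ⟨i, rfl⟩
  cases i with
  | ofNat n => simpa [zpow_natCast] using hn n a
  | negSucc n =>
    have key : (σ ^ ((n : ℕ) + 1)) ((σ ^ Int.negSucc n) a) = a := by
      have h3 : ((σ ^ Int.negSucc n) a) = (σ ^ (-((n : ℤ) + 1))) a := by
        norm_num [Int.negSucc_eq]
      have h4 : (σ ^ ((n : ℕ) + 1)) = (σ ^ (((n : ℕ) + 1 : ℕ) : ℤ)) := by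
        rw [zpow_natCast]
      rw [h3, h4, ← Equiv.Perm.mul_apply, ← zpow_add]
      have h5 : ((((n : ℕ) + 1 : ℕ) : ℤ)) + (-((n : ℤ) + 1)) = 0 := by push_cast; ring
      rw [h5, zpow_zero, Equiv.Perm.one_apply]
    have h := hn (n + 1) ((σ ^ Int.negSucc n) a)
    rw [key] at h
    exact h.symm

lemma numCycles_lt {σ τ : Equiv.Perm V} (hfσ : ∀ w, σ w ≠ w) (hfτ : ∀ w, τ w ≠ w)
    (h1 : ∀ a b, σ.SameCycle a b → τ.SameCycle a b)
    {x u : V} (h2 : τ.SameCycle x u) (h3 : ¬ σ.SameCycle x u) :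
    numCycles τ < numCycles σ := by
  classical
  rw [numCycles_eq_card_quot σ hfσ, numCycles_eq_card_quot τ hfτ]
  haveI : Fintype (Quotient (scSetoid σ)) := Fintype.ofFinite _
  haveI : Fintype (Quotient (scSetoid τ)) := Fintype.ofFinite _
  rw [Nat.card_eq_fintype_card, Nat.card_eq_fintype_card]
  let F : Quotient (scSetoid σ) → Quotient (scSetoid τ) :=
    Quotient.lift (fun a => Quotient.mk (scSetoid τ) a)
      (fun a b h => Quotient.sound (h1 a b h))
  apply Fintype.card_lt_of_surjective_not_injective F
  · intro q
    induction q using Quotient.ind with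
    | _ a => exact ⟨Quotient.mk (scSetoid σ) a, rfl⟩
  · intro hin
    exact h3 (Quotient.exact (hin (Quotient.sound h2 :
      F (Quotient.mk (scSetoid σ) x) = F (Quotient.mk (scSetoid σ) u))))

lemma chain_sc {τ ρ : Equiv.Perm V} {a b : V} (hab : ρ.SameCycle a b)
    (hagree : ∀ w, ρ.SameCycle a w → w ≠ b → τ w = ρ w) : τ.SameCycle a b := by
  classical
  by_cases hab' : a = b
  · subst hab'; exact Equiv.Perm.SameCycle.refl τ a
  obtain ⟨i, hi0, -, hieq⟩ := hab.exists_pow_eq''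
  have hP : ∃ n : ℕ, (ρ ^ (n + 1)) a = b :=
    ⟨i - 1, by rwa [Nat.sub_add_cancel hi0]⟩
  let k := Nat.find hP
  have hk : (ρ ^ (k + 1)) a = b := Nat.find_spec hP
  have hmin : ∀ j, j < k → (ρ ^ (j + 1)) a ≠ b := fun j hj => Nat.find_min hP hj
  have key : ∀ j, j ≤ k + 1 → (τ ^ j) a = (ρ ^ j) a := by
    intro j
    induction j with
    | zero => intro _; simp
    | succ j ih =>
      intro hj
      have hje : (τ ^ j) a = (ρ ^ j) a := ih (Nat.le_of_succ_le hj)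
      have hne : (ρ ^ j) a ≠ b := by
        cases j with
        | zero => simpa using hab'
        | succ m => exact hmin m (by omega)
      calc (τ ^ (j + 1)) a = τ ((τ ^ j) a) := by rw [pow_succ', Equiv.Perm.mul_apply]
        _ = τ ((ρ ^ j) a) := by rw [hje]
        _ = ρ ((ρ ^ j) a) := hagree _ ⟨(j : ℤ), by rw [zpow_natCast]⟩ hne
        _ = (ρ ^ (j + 1)) a := by rw [pow_succ', Equiv.Perm.mul_apply]
  exact ⟨((k + 1 : ℕ) : ℤ), by rw [zpow_natCast, key (k + 1) le_rfl, hk]⟩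

lemma fpf_of_tf {G : SimpleGraph V} {σ : Equiv.Perm V} (h : IsTwoFactor G σ) :
    ∀ w, σ w ≠ w := by
  intro w hw
  exact (h w).2 (by rw [hw, hw])

lemma sc_succ (σ : Equiv.Perm V) (a : V) : σ.SameCycle a (σ a) :=
  ⟨1, by simp⟩

/-- The permutation obtained from `σ` by reversing the cycle through `x`. -/
noncomputable def revOn (σ : Equiv.Perm V) (x : V) : Equiv.Perm V where
  toFun w := if σ.SameCycle x w then σ⁻¹ w else σ w
  invFun w := if σ.SameCycle x w then σ w else σ⁻¹ w
  left_inv w := by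
    dsimp only
    by_cases h : σ.SameCycle x w
    · rw [if_pos h, if_pos (show σ.SameCycle x (σ⁻¹ w) from Equiv.Perm.sameCycle_symm_apply_right.mpr h),
        Equiv.Perm.coe_inv, Equiv.apply_symm_apply]
    · rw [if_neg h, if_neg (fun hh => h (Equiv.Perm.sameCycle_apply_right.mp hh)),
        Equiv.Perm.coe_inv, Equiv.symm_apply_apply]
  right_inv w := by
    dsimp only
    by_cases h : σ.SameCycle x w
    · rw [if_pos h, if_pos (Equiv.Perm.sameCycle_apply_right.mpr h),
        Equiv.Perm.coe_inv, Equiv.symm_apply_apply]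
    · rw [if_neg h, if_neg (fun (hh : σ.SameCycle x (σ⁻¹ w)) => h (Equiv.Perm.sameCycle_symm_apply_right.mp hh)),
        Equiv.Perm.coe_inv, Equiv.apply_symm_apply]

lemma revOn_sc {σ : Equiv.Perm V} {x w : V} (h : σ.SameCycle x w) :
    revOn σ x w = σ⁻¹ w := if_pos h

lemma revOn_nsc {σ : Equiv.Perm V} {x w : V} (h : ¬ σ.SameCycle x w) :
    revOn σ x w = σ w := if_neg h

/-- Case B merge: `u → σ x → ⋯ → x → σ u → ⋯ → u` gives a `2`-factor with
fewer cycles.  -/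
lemma caseB_s9 {G : SimpleGraph V} {σ : Equiv.Perm V} (hσ : IsMinTwoFactor G σ)
    {x u : V} (hne : ¬ σ.SameCycle x u)
    (h1 : G.Adj u (σ x)) (h2 : G.Adj (σ u) x) : False := by
  have htf := hσ.1
  have hfpf := fpf_of_tf htf
  have hd : ∀ a b, σ.SameCycle x a → σ.SameCycle u b → a ≠ b := by
    rintro a b hxa hub rfl
    exact hne (hxa.trans hub.symm)
  set τ := σ * Equiv.swap x u with hτ
  have hτx : τ x = σ u := by
    simp [hτ, Equiv.Perm.mul_apply, Equiv.swap_apply_left]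
  have hτu : τ u = σ x := by
    simp [hτ, Equiv.Perm.mul_apply, Equiv.swap_apply_right]
  have hτo : ∀ w, w ≠ x → w ≠ u → τ w = σ w := by
    intro w hwx hwu
    simp [hτ, Equiv.Perm.mul_apply, Equiv.swap_apply_of_ne_of_ne hwx hwu]
  have hxu : x ≠ u := hd x u (Equiv.Perm.SameCycle.refl σ x) (Equiv.Perm.SameCycle.refl σ u)
  have hxv : x ≠ σ u := hd x (σ u) (Equiv.Perm.SameCycle.refl σ x) (sc_succ σ u)
  have hyu : σ x ≠ u := hd (σ x) u (sc_succ σ x) (Equiv.Perm.SameCycle.refl σ u)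
  have htfτ : IsTwoFactor G τ := by
    intro w
    by_cases hwx : w = x
    · rw [hwx]
      refine ⟨hτx ▸ h2.symm, ?_⟩
      rw [hτx, hτo (σ u) hxv.symm (fun hh => hfpf u hh)]
      exact fun hc => hd x (σ (σ u)) (Equiv.Perm.SameCycle.refl σ x)
        ((sc_succ σ u).trans (sc_succ σ (σ u))) hc.symm
    · by_cases hwu : w = u
      · rw [hwu]
        refine ⟨hτu ▸ h1, ?_⟩
        rw [hτu, hτo (σ x) (fun hh => hfpf x hh) hyu]
        exact hd (σ (σ x)) u ((sc_succ σ x).trans (sc_succ σ (σ x)))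
          (Equiv.Perm.SameCycle.refl σ u)
      · rw [hτo w hwx hwu]
        refine ⟨(htf w).1, ?_⟩
        by_cases hsx : σ w = x
        · rw [hsx, hτx]
          have hxw : σ.SameCycle x w := (hsx ▸ sc_succ σ w).symm
          exact (hd w (σ u) hxw (sc_succ σ u)).symm
        · by_cases hsu : σ w = u
          · rw [hsu, hτu]
            have huw : σ.SameCycle u w := (hsu ▸ sc_succ σ w).symm
            exact hd (σ x) w (sc_succ σ x) huw
          · rw [hτo (σ w) hsx hsu]
            exact (htf w).2
  have chainD : τ.SameCycle (σ u) u := by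
    refine chain_sc (sc_succ σ u).symm (fun w hw hwu => ?_)
    have huw : σ.SameCycle u w := (sc_succ σ u).trans hw
    exact hτo w (hd x w (Equiv.Perm.SameCycle.refl σ x) huw).symm hwu
  have hSCxu : τ.SameCycle x u := by
    have h' : τ.SameCycle x (σ u) := by rw [← hτx]; exact sc_succ τ x
    exact h'.trans chainD
  have h1' : ∀ a, τ.SameCycle a (σ a) := by
    intro a
    by_cases hax : a = x
    · rw [hax, ← hτu]
      exact hSCxu.trans (sc_succ τ u)
    · by_cases hau : a = u
      · rw [hau, ← hτx]
        exact hSCxu.symm.trans (sc_succ τ x)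
      · rw [← hτo a hax hau]
        exact sc_succ τ a
  have hlt := numCycles_lt hfpf (fpf_of_tf htfτ) (sc_mono h1') hSCxu hne
  exact absurd (hσ.2 τ htfτ) (Nat.not_le.mpr hlt)

/-- Case A merge: `u → x → ⋯ (reversed) ⋯ → σ x → σ u → ⋯ → u` gives a
`2`-factor with fewer cycles. -/
lemma caseA_s9 {G : SimpleGraph V} {σ : Equiv.Perm V} (hσ : IsMinTwoFactor G σ)
    {x u : V} (hne : ¬ σ.SameCycle x u)
    (h1 : G.Adj u x) (h2 : G.Adj (σ u) (σ x)) : False := by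
  have htf := hσ.1
  have hfpf := fpf_of_tf htf
  have hd : ∀ a b, σ.SameCycle x a → σ.SameCycle u b → a ≠ b := by
    rintro a b hxa hub rfl
    exact hne (hxa.trans hub.symm)
  have hdn : ∀ w, σ.SameCycle u w → ¬ σ.SameCycle x w :=
    fun w huw hxw => hne (hxw.trans huw.symm)
  set π := revOn σ x with hπ
  set τ := π * Equiv.swap (σ x) u with hτ
  have hτy : τ (σ x) = σ u := by
    rw [hτ, Equiv.Perm.mul_apply, Equiv.swap_apply_left, hπ, revOn_nsc hne]
  have hτu : τ u = x := by
    rw [hτ, Equiv.Perm.mul_apply, Equiv.swap_apply_right, hπ, revOn_sc (sc_succ σ x)]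
    simp
  have hτC : ∀ w, σ.SameCycle x w → w ≠ σ x → τ w = σ⁻¹ w := by
    intro w hw hwy
    have hwu : w ≠ u := fun hc => hne (hc ▸ hw)
    rw [hτ, Equiv.Perm.mul_apply, Equiv.swap_apply_of_ne_of_ne hwy hwu, hπ, revOn_sc hw]
  have hτD : ∀ w, ¬ σ.SameCycle x w → w ≠ u → τ w = σ w := by
    intro w hw hwu
    have hwy : w ≠ σ x := fun hc => hw (hc ▸ sc_succ σ x)
    rw [hτ, Equiv.Perm.mul_apply, Equiv.swap_apply_of_ne_of_ne hwy hwu, hπ, revOn_nsc hw]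
  have hxu : x ≠ u := fun hc => hne (hc ▸ Equiv.Perm.SameCycle.refl σ x)
  have hscinv : σ.SameCycle x (σ⁻¹ x) :=
    Equiv.Perm.sameCycle_symm_apply_right.mpr (Equiv.Perm.SameCycle.refl σ x)
  have htfτ : IsTwoFactor G τ := by
    intro w
    by_cases hwy : w = σ x
    · rw [hwy]
      refine ⟨hτy ▸ h2.symm, ?_⟩
      rw [hτy, hτD (σ u) (hdn (σ u) (sc_succ σ u)) (fun hc => hfpf u hc)]
      exact fun hc => hdn (σ (σ u)) ((sc_succ σ u).trans (sc_succ σ (σ u)))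
        (hc ▸ sc_succ σ x)
    · by_cases hwu : w = u
      · rw [hwu]
        refine ⟨hτu ▸ h1, ?_⟩
        rw [hτu, hτC x (Equiv.Perm.SameCycle.refl σ x) (fun hc => hfpf x hc.symm)]
        exact fun hc => hne (hc ▸ hscinv)
      · by_cases hsc : σ.SameCycle x w
        · rw [hτC w hsc hwy]
          refine ⟨?_, ?_⟩
          · have := (htf (σ⁻¹ w)).1
            simpa using this.symm
          · have hinvC : σ.SameCycle x (σ⁻¹ w) :=
              Equiv.Perm.sameCycle_symm_apply_right.mpr hsc
            by_cases hiy : σ⁻¹ w = σ x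
            · rw [hiy, hτy]
              exact (hd w (σ u) hsc (sc_succ σ u)).symm
            · rw [hτC (σ⁻¹ w) hinvC hiy]
              have h4 := (htf (σ⁻¹ (σ⁻¹ w))).2
              simp only [Equiv.Perm.coe_inv, Equiv.apply_symm_apply] at h4
              exact fun hc => h4 hc.symm
        · rw [hτD w hsc hwu]
          refine ⟨(htf w).1, ?_⟩
          by_cases hsu : σ w = u
          · rw [hsu, hτu]
            exact fun hc => hsc (hc ▸ Equiv.Perm.SameCycle.refl σ x)
          · have hsy : ¬ σ.SameCycle x (σ w) :=
              fun hc => hsc (Equiv.Perm.sameCycle_apply_right.mp hc)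
            rw [hτD (σ w) hsy hsu]
            exact (htf w).2
  have hSCxy : τ.SameCycle x (σ x) := by
    refine chain_sc (Equiv.Perm.sameCycle_inv.mpr (sc_succ σ x)) (fun w hw hwy => ?_)
    have hw' : σ.SameCycle x w := Equiv.Perm.sameCycle_inv.mp hw
    rw [hτC w hw' hwy]
  have hSCxu : τ.SameCycle x u := by
    have h' : τ.SameCycle u x := by rw [← hτu]; exact sc_succ τ u
    exact h'.symm
  have h1' : ∀ a, τ.SameCycle a (σ a) := by
    intro a
    by_cases hax : a = x
    · rw [hax]; exact hSCxy
    · by_cases hay : a = σ x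
      · have h6 : τ (σ (σ x)) = σ x := by
          rw [hτC (σ (σ x)) ((sc_succ σ x).trans (sc_succ σ (σ x)))
            (fun hc => hfpf (σ x) hc)]
          simp
        have h7 : τ.SameCycle (σ (σ x)) (τ (σ (σ x))) := sc_succ τ (σ (σ x))
        rw [h6] at h7
        rw [hay]
        exact h7.symm
      · by_cases hau : a = u
        · rw [hau]
          have h5 : τ.SameCycle u (σ x) := (hSCxu.symm).trans hSCxy
          rw [← hτy]
          exact h5.trans (sc_succ τ (σ x))
        · by_cases hsc : σ.SameCycle x a
          · have hsa : σ.SameCycle x (σ a) := Equiv.Perm.sameCycle_apply_right.mpr hsc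
            have hsay : σ a ≠ σ x := fun hc => hax (σ.injective hc)
            have h6 : τ (σ a) = a := by
              rw [hτC (σ a) hsa hsay]
              simp
            have h7 : τ.SameCycle (σ a) (τ (σ a)) := sc_succ τ (σ a)
            rw [h6] at h7
            exact h7.symm
          · rw [← hτD a hsc hau]
            exact sc_succ τ a
  have hlt := numCycles_lt hfpf (fpf_of_tf htfτ) (sc_mono h1') hSCxu hne
  exact absurd (hσ.2 τ htfτ) (Nat.not_le.mpr hlt)

end Aux

theorem stmt9 {V : Type*} [Fintype V] (G : SimpleGraph V) (h2 : TwoK2Free G)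
    (σ : Equiv.Perm V) (hσ : IsMinTwoFactor G σ) (hcyc : 1 < numCycles σ)
    (x : V) (hx : ¬ AType G σ x) (hy : ¬ AType G σ (σ x)) :
    ∀ u : V, ¬ σ.SameCycle x u →
      ((G.Adj u x ∨ G.Adj u (σ x)) ↔ ¬ (G.Adj (σ u) x ∨ G.Adj (σ u) (σ x))) := by
  intro u hne
  have htf := hσ.1
  have hxy : G.Adj x (σ x) := (htf x).1
  have huv : G.Adj u (σ u) := (htf u).1
  have hd : ∀ a b, σ.SameCycle x a → σ.SameCycle u b → a ≠ b := by
    rintro a b hxa hub rfl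
    exact hne (hxa.trans hub.symm)
  have hxu : x ≠ u := hd x u (Equiv.Perm.SameCycle.refl σ x) (Equiv.Perm.SameCycle.refl σ u)
  have hxv : x ≠ σ u := hd x (σ u) (Equiv.Perm.SameCycle.refl σ x) (sc_succ σ u)
  have hyu : σ x ≠ u := hd (σ x) u (sc_succ σ x) (Equiv.Perm.SameCycle.refl σ u)
  have hyv : σ x ≠ σ u := hd (σ x) (σ u) (sc_succ σ x) (sc_succ σ u)
  constructor
  · intro hu hcon
    rcases hu with h | h <;> rcases hcon with h' | h'
    · exact hx ⟨u, hne, h.symm, h'.symm⟩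
    · exact caseA_s9 hσ hne h h'
    · exact caseB_s9 hσ hne h h'
    · refine hy ⟨u, ?_, h.symm, h'.symm⟩
      exact fun hc => hne ((sc_succ σ x).trans hc)
  · intro hcon
    by_contra hu
    exact h2 ⟨x, σ x, u, σ u, hxy, huv, hxu, hxv, hyu, hyv,
      fun h => hu (Or.inl h.symm), fun h => hcon (Or.inl h.symm),
      fun h => hu (Or.inr h.symm), fun h => hcon (Or.inr h.symm)⟩
end
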